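/- arXiv:1002.0440 — 2 statements merged into one kernel-verified Lean document; each statement's English description precedes it below -/
import Mathlib

section
/- For w ∈ B_n with w = b·p where b is the product of the balanced cycles of w and p = p_1⋯p_k is the product of its disjoint paired cycles, the interval [e,w] in the absolute order on B_n is isomorphic as a poset to the direct product [e,b] × [e,p_1] × ⋯ × [e,p_k]. -/
open scoped Classical

/-- Minimal length of `w` as a product of elements of `T`. -/
noncomputable def wordLen {G : Type*} [Group G] (T : Set G) (w : G) : ℕ :=
  sInf {k | ∃ l : List G, l.length = k ∧ (∀ t ∈ l, t ∈ T) ∧ l.prod = w}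

/-- The absolute order: `u ⪯ v` iff `ℓ_T(u) + ℓ_T(u⁻¹v) = ℓ_T(v)`. -/
def absLe {G : Type*} [Group G] (T : Set G) (u v : G) : Prop :=
  wordLen T u + wordLen T (u⁻¹ * v) = wordLen T v

/-- We model the set `{±1, …, ±n}` as `Fin n × Bool`; negation flips the Boolean. -/
def negp {n : ℕ} (p : Fin n × Bool) : Fin n × Bool := (p.1, !p.2)

/-- The hyperoctahedral group `B_n`: permutations `w` of `{±1,…,±n}` with
`w(-i) = -w(i)`. -/
def inB {n : ℕ} (w : Equiv.Perm (Fin n × Bool)) : Prop :=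
  ∀ p, w (negp p) = negp (w p)

/-- The set of reflections of `B_n`: balanced reflections `[i]` and paired
reflections `((i,j))`, `((i,-j))`. -/
def reflB (n : ℕ) : Set (Equiv.Perm (Fin n × Bool)) :=
  {σ | (∃ i : Fin n, σ = Equiv.swap (i, true) (i, false)) ∨
    (∃ i j : Fin n, i ≠ j ∧
      σ = Equiv.swap (i, true) (j, true) * Equiv.swap (i, false) (j, false)) ∨
    (∃ i j : Fin n, i ≠ j ∧
      σ = Equiv.swap (i, true) (j, false) * Equiv.swap (i, false) (j, true))}

/-- `O` is an orbit (cycle) of the signed permutation `w`. -/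
def isOrbit {n : ℕ} (w : Equiv.Perm (Fin n × Bool)) (O : Set (Fin n × Bool)) : Prop :=
  ∃ p, O = {q | w.SameCycle p q}

/-- A balanced cycle of `w` corresponds to an orbit which is stable under negation;
a balanced `k`-cycle is a balanced orbit of cardinality `2k`. -/
def balancedOrbit {n : ℕ} (w : Equiv.Perm (Fin n × Bool)) (O : Set (Fin n × Bool)) : Prop :=
  isOrbit w O ∧ negp '' O = O

/-- The number of paired cycles of `w ∈ B_n` (fixed points count as paired
1-cycles): non-balanced orbits come in pairs `{O, -O}`, each such pair being one
paired cycle. -/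
noncomputable def pairedCycles {n : ℕ} (w : Equiv.Perm (Fin n × Bool)) : ℕ :=
  Nat.card {O : Set (Fin n × Bool) // isOrbit w O ∧ negp '' O ≠ O} / 2


theorem Equiv.Perm.apply_inv_self {α : Type*} (f : Equiv.Perm α) (x : α) : f (f⁻¹ x) = x :=
  f.apply_symm_apply x

theorem Equiv.Perm.inv_apply_self {α : Type*} (f : Equiv.Perm α) (x : α) : f⁻¹ (f x) = x :=
  f.symm_apply_apply x

section Basic
variable {n : ℕ}

@[simp] lemma negp_negp (q : Fin n × Bool) : negp (negp q) = q := by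
  simp [negp]

@[simp] lemma negp_fst (q : Fin n × Bool) : (negp q).1 = q.1 := rfl

lemma negp_ne (q : Fin n × Bool) : negp q ≠ q := by
  simp [negp, Prod.ext_iff]

lemma inB_one : inB (1 : Equiv.Perm (Fin n × Bool)) := fun q => rfl

lemma inB.mul {u v : Equiv.Perm (Fin n × Bool)} (hu : inB u) (hv : inB v) :
    inB (u * v) := by
  intro q
  simp only [Equiv.Perm.mul_apply, hv q, hu (v q)]

lemma inB.inv {u : Equiv.Perm (Fin n × Bool)} (hu : inB u) : inB u⁻¹ := by
  intro q
  apply u.injective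
  rw [Equiv.Perm.apply_inv_self, hu (u⁻¹ q), Equiv.Perm.apply_inv_self]

lemma inB.apply_negp_true {u : Equiv.Perm (Fin n × Bool)} (hu : inB u) {i : Fin n}
    (h : u (i, true) = (i, true)) : u (i, false) = (i, false) := by
  have := hu (i, true)
  simpa [negp, h] using this

lemma inB.prod {l : List (Equiv.Perm (Fin n × Bool))} (h : ∀ x ∈ l, inB x) :
    inB l.prod := by
  induction l with
  | nil => simpa using inB_one
  | cons x l ih =>
    simp only [List.prod_cons]
    exact (h x (by simp)).mul (ih fun y hy => h y (by simp [hy]))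

/-- The signed coordinate function of a vector. -/
def hatv (v : Fin n → ℝ) (q : Fin n × Bool) : ℝ := (if q.2 then 1 else -1) * v q.1

lemma hatv_add (v u : Fin n → ℝ) (q) : hatv (v + u) q = hatv v q + hatv u q := by
  simp only [hatv, Pi.add_apply]; ring

lemma hatv_smul (c : ℝ) (v : Fin n → ℝ) (q) : hatv (c • v) q = c * hatv v q := by
  simp only [hatv, Pi.smul_apply, smul_eq_mul]; ring

lemma hatv_eq_zero_of_ne {v : Fin n → ℝ} {q : Fin n × Bool} (h : v q.1 = 0) :
    hatv v q = 0 := by simp [hatv, h]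

lemma hatv_negp (v : Fin n → ℝ) (q) : hatv v (negp q) = - hatv v q := by
  cases q with
  | mk i s => cases s <;> simp [hatv, negp]

/-- The fixed space of a signed permutation acting on `ℝ^n`. -/
def fixd (w : Equiv.Perm (Fin n × Bool)) : Submodule ℝ (Fin n → ℝ) where
  carrier := {v | ∀ q, hatv v (w q) = hatv v q}
  add_mem' := by
    intro a b ha hb q
    simp [hatv_add, ha q, hb q]
  zero_mem' := by intro q; simp [hatv]
  smul_mem' := by
    intro c v hv q
    simp [hatv_smul, hv q]

lemma mem_fixd {w : Equiv.Perm (Fin n × Bool)} {v : Fin n → ℝ} :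
    v ∈ fixd w ↔ ∀ q, hatv v (w q) = hatv v q := Iff.rfl

@[simp] lemma fixd_one : fixd (1 : Equiv.Perm (Fin n × Bool)) = ⊤ := by
  ext v; simp [mem_fixd]

lemma fixd_mul_le {u v : Equiv.Perm (Fin n × Bool)} :
    fixd u ⊓ fixd v ≤ fixd (u * v) := by
  rintro x ⟨hu, hv⟩ q
  simp only [Equiv.Perm.mul_apply]
  rw [hu (v q), hv q]

lemma fixd_inv {u : Equiv.Perm (Fin n × Bool)} : fixd u⁻¹ = fixd u := by
  ext v
  constructor
  · intro h q
    have h2 := h (u q)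
    simp only [Equiv.Perm.inv_apply_self] at h2
    exact h2.symm
  · intro h q
    have := h (u⁻¹ q)
    simp at this
    rw [this]
    rfl

/-- Reflection length will equal this quantity. -/
noncomputable def dd (w : Equiv.Perm (Fin n × Bool)) : ℕ :=
  n - Module.finrank ℝ (fixd w)

lemma finrank_fixd_le (w : Equiv.Perm (Fin n × Bool)) :
    Module.finrank ℝ (fixd w) ≤ n := by
  have := Submodule.finrank_le (fixd w)
  simpa [Module.finrank_pi] using this

@[simp] lemma dd_one : dd (1 : Equiv.Perm (Fin n × Bool)) = 0 := by
  have : Module.finrank ℝ (fixd (1 : Equiv.Perm (Fin n × Bool))) =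
      Module.finrank ℝ (Fin n → ℝ) := by
    rw [fixd_one]; exact finrank_top ℝ _
  simp [dd, this, Module.finrank_pi]

lemma dd_mul_le (u v : Equiv.Perm (Fin n × Bool)) : dd (u * v) ≤ dd u + dd v := by
  have h1 : Module.finrank ℝ (fixd u ⊓ fixd v : Submodule ℝ (Fin n → ℝ)) ≤
      Module.finrank ℝ (fixd (u * v)) :=
    Submodule.finrank_mono fixd_mul_le
  have h2 := Submodule.finrank_sup_add_finrank_inf_eq (fixd u) (fixd v)
  have h3 : Module.finrank ℝ (fixd u ⊔ fixd v : Submodule ℝ (Fin n → ℝ)) ≤ n := by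
    have := Submodule.finrank_le (fixd u ⊔ fixd v)
    simpa [Module.finrank_pi] using this
  have h4 := finrank_fixd_le u
  have h5 := finrank_fixd_le v
  have h6 := finrank_fixd_le (u * v)
  unfold dd
  omega

end Basic

section Tapply
variable {n : ℕ}
lemma t1_apply (i : Fin n) (m : Fin n) (s : Bool) :
    (Equiv.swap ((i,true) : Fin n × Bool) (i,false)) (m,s)
      = if m = i then (m, !s) else (m,s) := by
  by_cases h : m = i
  · subst h; cases s <;> simp [Equiv.swap_apply_def]
  · simp [Equiv.swap_apply_def, Prod.ext_iff, h]

lemma t2_apply (i j : Fin n) (hij : i ≠ j) (m : Fin n) (s : Bool) :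
    (Equiv.swap ((i,true) : Fin n × Bool) (j,true) *
      Equiv.swap ((i,false) : Fin n × Bool) (j,false)) (m,s)
      = if m = i then (j,s) else if m = j then (i,s) else (m,s) := by
  by_cases h1 : m = i
  · subst h1; cases s <;>
      simp [Equiv.Perm.mul_apply, Equiv.swap_apply_def, Prod.ext_iff, hij, Ne.symm hij]
  · by_cases h2 : m = j
    · subst h2; cases s <;>
        simp [Equiv.Perm.mul_apply, Equiv.swap_apply_def, Prod.ext_iff, hij, Ne.symm hij]
    · cases s <;>
        simp [Equiv.Perm.mul_apply, Equiv.swap_apply_def, Prod.ext_iff, h1, h2]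

lemma t3_apply (i j : Fin n) (hij : i ≠ j) (m : Fin n) (s : Bool) :
    (Equiv.swap ((i,true) : Fin n × Bool) (j,false) *
      Equiv.swap ((i,false) : Fin n × Bool) (j,true)) (m,s)
      = if m = i then (j,!s) else if m = j then (i,!s) else (m,s) := by
  by_cases h1 : m = i
  · subst h1; cases s <;>
      simp [Equiv.Perm.mul_apply, Equiv.swap_apply_def, Prod.ext_iff, hij, Ne.symm hij]
  · by_cases h2 : m = j
    · subst h2; cases s <;>
        simp [Equiv.Perm.mul_apply, Equiv.swap_apply_def, Prod.ext_iff, hij, Ne.symm hij]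
    · cases s <;>
        simp [Equiv.Perm.mul_apply, Equiv.swap_apply_def, Prod.ext_iff, h1, h2]

end Tapply

/-- `w` is supported in the index set `S`. -/
def suppIn {n : ℕ} (w : Equiv.Perm (Fin n × Bool)) (S : Set (Fin n)) : Prop :=
  ∀ q : Fin n × Bool, q.1 ∉ S → w q = q

lemma suppIn_one (S : Set (Fin n)) : suppIn (1 : Equiv.Perm (Fin n × Bool)) S :=
  fun _ _ => rfl

lemma suppIn.inv {w : Equiv.Perm (Fin n × Bool)} {S : Set (Fin n)} (h : suppIn w S) :
    suppIn w⁻¹ S := by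
  intro q hq
  apply w.injective
  rw [Equiv.Perm.apply_inv_self, h q hq]

lemma suppIn.mul {u v : Equiv.Perm (Fin n × Bool)} {S : Set (Fin n)}
    (hu : suppIn u S) (hv : suppIn v S) : suppIn (u * v) S := by
  intro q hq
  simp only [Equiv.Perm.mul_apply, hv q hq, hu q hq]

lemma suppIn.mono {u : Equiv.Perm (Fin n × Bool)} {S S' : Set (Fin n)}
    (hu : suppIn u S) (h : S ⊆ S') : suppIn u S' :=
  fun q hq => hu q (fun hs => hq (h hs))

lemma suppIn.apply_mem {w : Equiv.Perm (Fin n × Bool)} {S : Set (Fin n)}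
    (h : suppIn w S) {q : Fin n × Bool} (hq : q.1 ∈ S) : (w q).1 ∈ S := by
  by_contra hns
  have : w (w q) = w q := h (w q) hns
  have : w q = q := w.injective this
  rw [this] at hns; exact hns hq

/-- A vector vanishing on the support of `w` is fixed. -/
lemma mem_fixd_of_zero_on {w : Equiv.Perm (Fin n × Bool)} {S : Set (Fin n)}
    (h : suppIn w S) {v : Fin n → ℝ} (hv : ∀ m ∈ S, v m = 0) : v ∈ fixd w := by
  rw [mem_fixd]
  intro q
  by_cases hq : q.1 ∈ S
  · have h1 : v (w q).1 = 0 := hv _ (h.apply_mem hq)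
    have h2 : v q.1 = 0 := hv _ hq
    simp [hatv, h1, h2]
  · rw [h q hq]

lemma fixd_mul_disjoint {x y : Equiv.Perm (Fin n × Bool)} {A B : Set (Fin n)}
    (hx : suppIn x A) (hy : suppIn y B) (hd : Disjoint A B) :
    fixd (x * y) = fixd x ⊓ fixd y := by
  apply le_antisymm
  · intro v hv
    rw [mem_fixd] at hv
    have hyfix : v ∈ fixd y := by
      rw [mem_fixd]
      intro q
      by_cases hq : q.1 ∈ B
      · have hA : (y q).1 ∉ A := fun hA => hd.ne_of_mem hA (hy.apply_mem hq) rfl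
        have := hv q
        rw [Equiv.Perm.mul_apply, hx (y q) hA] at this
        exact this
      · rw [hy q hq]
    refine ⟨?_, hyfix⟩
    show v ∈ fixd x
    rw [mem_fixd]
    intro q
    have h1 := hv (y⁻¹ q)
    rw [Equiv.Perm.mul_apply, Equiv.Perm.apply_inv_self] at h1
    have h2 : hatv v (y⁻¹ q) = hatv v q := by
      rw [← fixd_inv, mem_fixd] at hyfix
      exact (hyfix q)
    rw [h1, h2]
  · exact fixd_mul_le

lemma fixd_sup_top {x y : Equiv.Perm (Fin n × Bool)} {A B : Set (Fin n)}
    (hx : suppIn x A) (hy : suppIn y B) (hd : Disjoint A B) :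
    fixd x ⊔ fixd y = ⊤ := by
  rw [eq_top_iff]
  intro v _
  classical
  set f : Fin n → ℝ := fun m => if m ∈ A then 0 else v m with hf
  set g : Fin n → ℝ := fun m => if m ∈ A then v m else 0 with hg
  have hfg : v = f + g := by
    funext m
    by_cases hm : m ∈ A <;> simp [hf, hg, hm]
  have hfx : f ∈ fixd x := mem_fixd_of_zero_on hx (fun m hm => by simp [hf, hm])
  have hgy : g ∈ fixd y := mem_fixd_of_zero_on hy (fun m hm => by
    have : m ∉ A := fun hA => hd.ne_of_mem hA hm rfl
    simp [hg, this])
  rw [hfg]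
  exact Submodule.add_mem_sup hfx hgy

lemma dd_add {x y : Equiv.Perm (Fin n × Bool)} {A B : Set (Fin n)}
    (hx : suppIn x A) (hy : suppIn y B) (hd : Disjoint A B) :
    dd (x * y) = dd x + dd y := by
  have h1 := Submodule.finrank_sup_add_finrank_inf_eq (fixd x) (fixd y)
  rw [fixd_sup_top hx hy hd, ← fixd_mul_disjoint hx hy hd] at h1
  have htop : Module.finrank ℝ (⊤ : Submodule ℝ (Fin n → ℝ)) = n := by
    rw [finrank_top]; simp [Module.finrank_pi]
  rw [htop] at h1
  have h4 := finrank_fixd_le x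
  have h5 := finrank_fixd_le y
  have h6 := finrank_fixd_le (x * y)
  unfold dd
  omega

/-- products over lists of disjointly-supported permutations -/
lemma d_list (L : List (Equiv.Perm (Fin n × Bool) × Set (Fin n)))
    (h : ∀ x ∈ L, suppIn x.1 x.2)
    (hd : L.Pairwise fun x y => Disjoint x.2 y.2) :
    suppIn (L.map Prod.fst).prod (⋃ x ∈ L, x.2) ∧
      dd (L.map Prod.fst).prod = (L.map fun x => dd x.1).sum := by
  induction L with
  | nil =>
    constructor
    · simpa using suppIn_one (n := n) _
    · simpa using dd_one (n := n)
  | cons a L ih =>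
    rw [List.pairwise_cons] at hd
    obtain ⟨hab, hLp⟩ := hd
    obtain ⟨ihs, ihd⟩ := ih (fun x hx => h x (by simp [hx])) hLp
    have hda : Disjoint a.2 (⋃ x ∈ L, x.2) := by
      rw [Set.disjoint_iUnion_right]
      intro x
      rw [Set.disjoint_iUnion_right]
      exact fun hx => hab x hx
    have ha : suppIn a.1 a.2 := h a (by simp)
    constructor
    · simp only [List.map_cons, List.prod_cons]
      have : suppIn (a.1 * (L.map Prod.fst).prod) (a.2 ∪ ⋃ x ∈ L, x.2) :=
        (ha.mono Set.subset_union_left).mul (ihs.mono Set.subset_union_right)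
      have heq : (⋃ x ∈ a :: L, x.2) = a.2 ∪ ⋃ x ∈ L, x.2 := by
        ext m
        simp only [List.mem_cons, Set.mem_iUnion, Set.mem_union]
        constructor
        · rintro ⟨x, hx | hx, hm⟩
          · exact Or.inl (hx ▸ hm)
          · exact Or.inr ⟨x, hx, hm⟩
        · rintro (hm | ⟨x, hx, hm⟩)
          · exact ⟨a, Or.inl rfl, hm⟩
          · exact ⟨x, Or.inr hx, hm⟩
      rw [heq]
      exact this
    · simp only [List.map_cons, List.prod_cons, List.sum_cons]
      rw [dd_add ha ihs hda, ihd]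


section C3
variable {n : ℕ}

lemma hatv_single (i m : Fin n) (s : Bool) :
    hatv (Pi.single i 1) (m, s) = if m = i then (if s then (1:ℝ) else -1) else 0 := by
  by_cases h : m = i
  · subst h; simp [hatv, Pi.single_apply]
  · simp [hatv, Pi.single_apply, h]

lemma reflB_inB {t : Equiv.Perm (Fin n × Bool)} (ht : t ∈ reflB n) : inB t := by
  rintro ⟨m, s⟩
  rcases ht with ⟨i, rfl⟩ | ⟨i, j, hij, rfl⟩ | ⟨i, j, hij, rfl⟩
  · show _ = negp _
    rw [show negp (m,s) = (m,!s) from rfl, t1_apply, t1_apply]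
    by_cases h : m = i <;> simp [h, negp]
  · rw [show negp (m,s) = (m,!s) from rfl, t2_apply i j hij, t2_apply i j hij]
    by_cases h1 : m = i
    · simp [h1, negp, Ne.symm hij]
    · by_cases h2 : m = j <;> simp [h1, h2, negp, Ne.symm hij]
  · rw [show negp (m,s) = (m,!s) from rfl, t3_apply i j hij, t3_apply i j hij]
    by_cases h1 : m = i
    · simp [h1, negp, Ne.symm hij]
    · by_cases h2 : m = j <;> simp [h1, h2, negp, Ne.symm hij]

lemma reflB_sq {t : Equiv.Perm (Fin n × Bool)} (ht : t ∈ reflB n) : t * t = 1 := by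
  rcases ht with ⟨i, rfl⟩ | ⟨i, j, hij, rfl⟩ | ⟨i, j, hij, rfl⟩
  · exact Equiv.swap_mul_self _ _
  · have hT := t2_apply i j hij
    apply Equiv.ext
    rintro ⟨m, s⟩
    rw [Equiv.Perm.mul_apply]
    by_cases h1 : m = i
    · simp [hT, h1, hij, Ne.symm hij]
    · by_cases h2 : m = j <;> simp [hT, h1, h2, hij, Ne.symm hij]
  · have hT := t3_apply i j hij
    apply Equiv.ext
    rintro ⟨m, s⟩
    rw [Equiv.Perm.mul_apply]
    by_cases h1 : m = i
    · simp [hT, h1, hij, Ne.symm hij]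
    · by_cases h2 : m = j <;> simp [hT, h1, h2, hij, Ne.symm hij]

lemma dd_le_one_of_ker {t : Equiv.Perm (Fin n × Bool)} (ψ : (Fin n → ℝ) →ₗ[ℝ] ℝ)
    (h : LinearMap.ker ψ ≤ fixd t) : dd t ≤ 1 := by
  have h1 := LinearMap.finrank_range_add_finrank_ker ψ
  have h2 : Module.finrank ℝ (LinearMap.range ψ) ≤ 1 := by
    have := Submodule.finrank_le (LinearMap.range ψ)
    simpa using this
  have h3 : Module.finrank ℝ (Fin n → ℝ) = n := by simp [Module.finrank_pi]
  have h4 : Module.finrank ℝ (LinearMap.ker ψ) ≤ Module.finrank ℝ (fixd t) :=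
    Submodule.finrank_mono h
  have h5 := finrank_fixd_le t
  rw [h3] at h1
  unfold dd
  omega

lemma reflB_dd_le {t : Equiv.Perm (Fin n × Bool)} (ht : t ∈ reflB n) : dd t ≤ 1 := by
  rcases ht with ⟨i, rfl⟩ | ⟨i, j, hij, rfl⟩ | ⟨i, j, hij, rfl⟩
  · refine dd_le_one_of_ker (LinearMap.proj i) ?_
    intro v hv
    rw [LinearMap.mem_ker] at hv
    rw [mem_fixd]
    rintro ⟨m, s⟩
    rw [t1_apply]
    by_cases h : m = i
    · subst h; cases s <;> simp_all [hatv]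
    · simp [h]
  · refine dd_le_one_of_ker ((LinearMap.proj i : (Fin n → ℝ) →ₗ[ℝ] ℝ) - (LinearMap.proj j : (Fin n → ℝ) →ₗ[ℝ] ℝ)) ?_
    intro v hv
    rw [LinearMap.mem_ker] at hv
    have hv' : v i = v j := by
      have : v i - v j = 0 := hv
      linarith
    rw [mem_fixd]
    rintro ⟨m, s⟩
    rw [t2_apply i j hij]
    by_cases h1 : m = i
    · subst h1; cases s <;> simp_all [hatv]
    · by_cases h2 : m = j
      · subst h2; cases s <;> simp_all [hatv]
      · simp [h1, h2]
  · refine dd_le_one_of_ker ((LinearMap.proj i : (Fin n → ℝ) →ₗ[ℝ] ℝ) + (LinearMap.proj j : (Fin n → ℝ) →ₗ[ℝ] ℝ)) ?_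
    intro v hv
    rw [LinearMap.mem_ker] at hv
    have hv' : v j = -(v i) := by
      have : v i + v j = 0 := hv
      linarith
    rw [mem_fixd]
    rintro ⟨m, s⟩
    rw [t3_apply i j hij]
    by_cases h1 : m = i
    · subst h1; cases s <;> simp_all [hatv] <;> linarith
    · by_cases h2 : m = j
      · subst h2; cases s <;> simp_all [hatv] <;> linarith
      · simp [h1, h2]

end C3

section Carter
variable {n : ℕ}

lemma fixd_le_of_le_fixt {w t : Equiv.Perm (Fin n × Bool)}
    (h : ∀ v, v ∈ fixd w → v ∈ fixd t) : fixd w ≤ fixd (t * w) := by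
  intro v hv
  have ht := h v hv
  rw [mem_fixd] at hv ht ⊢
  intro q
  rw [Equiv.Perm.mul_apply, ht (w q), hv q]

lemma carter {w : Equiv.Perm (Fin n × Bool)} (hw : inB w) {i : Fin n}
    (hi : w (i, true) ≠ (i, true)) :
    ∃ t ∈ reflB n, t * t = 1 ∧ fixd w < fixd (t * w) := by
  rcases hjs : w (i, true) with ⟨j, s⟩
  have e := Pi.single (M := fun _ : Fin n => ℝ) i 1
  cases s
  · -- w (i,true) = (j,false)
    by_cases hij : j = i
    · -- balanced case : t = [i]
      subst hij
      set t := Equiv.swap ((j,true) : Fin n × Bool) (j,false) with htdef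
      have hT := t1_apply (n := n) j
      refine ⟨t, Or.inl ⟨j, rfl⟩, reflB_sq (Or.inl ⟨j, rfl⟩), ?_⟩
      have hwf : w (j, false) = (j, true) := by
        have h1 := hw (j, true)
        rw [hjs] at h1
        exact h1
      have hmem : ∀ v, v ∈ fixd w → v ∈ fixd t := by
        intro v hv
        rw [mem_fixd] at hv
        have h0 : v j = 0 := by
          have := hv (j, true)
          rw [hjs] at this
          simp [hatv] at this
          linarith
        rw [mem_fixd]
        rintro ⟨m, u⟩
        rw [hT]
        by_cases h : m = j
        · subst h; cases u <;> simp [hatv, h0]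
        · simp [h]
      have hlt : fixd w ≤ fixd (t * w) := fixd_le_of_le_fixt hmem
      refine lt_of_le_of_ne hlt ?_
      intro heq
      have hei : (Pi.single j 1 : Fin n → ℝ) = Pi.single j 1 := rfl
      have h1 : (Pi.single j 1 : Fin n → ℝ) ∉ fixd w := by
        rw [mem_fixd]
        push_neg
        refine ⟨(j, true), ?_⟩
        rw [hjs, hatv_single, hatv_single]
        norm_num
      have h2 : (Pi.single j 1 : Fin n → ℝ) ∈ fixd (t * w) := by
        rw [mem_fixd]
        rintro ⟨m, u⟩
        rw [Equiv.Perm.mul_apply]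
        have hclaim : ∀ r : Fin n × Bool, hatv (Pi.single j 1 : Fin n → ℝ) (t r) = - hatv (Pi.single j 1 : Fin n → ℝ) r := by
          rintro ⟨m', u'⟩
          rw [hT]
          by_cases h : m' = j
          · subst h; cases u' <;> simp [hatv_single]
          · simp [h, hatv_single]
        rw [hclaim]
        by_cases hm : m = j
        · subst hm
          cases u
          · rw [hwf, hatv_single, hatv_single]; norm_num
          · rw [hjs, hatv_single, hatv_single]; norm_num
        · rcases hq : w (m, u) with ⟨m', u'⟩
          by_cases hm' : m' = j
          · exfalso
            rw [hm'] at hq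
            cases u'
            · have : (m, u) = (j, true) := w.injective (by rw [hq, hjs])
              exact hm (by injection this)
            · have : (m, u) = (j, false) := w.injective (by rw [hq, hwf])
              exact hm (by injection this)
          · rw [hatv_single, hatv_single]; simp [hm, hm']
      rw [← heq] at h2
      exact h1 h2
    · -- t3 case : w (i,true) = (j,false), j ≠ i
      have hij' : i ≠ j := fun h => hij h.symm
      set t := Equiv.swap ((i,true) : Fin n × Bool) (j,false) *
        Equiv.swap ((i,false) : Fin n × Bool) (j,true) with htdef
      have hT := t3_apply i j hij'
      refine ⟨t, Or.inr (Or.inr ⟨i, j, hij', rfl⟩), reflB_sq (Or.inr (Or.inr ⟨i, j, hij', rfl⟩)), ?_⟩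
      have hwf : w (i, false) = (j, true) := by
        have h1 := hw (i, true)
        rw [hjs] at h1
        exact h1
      have hmem : ∀ v, v ∈ fixd w → v ∈ fixd t := by
        intro v hv
        rw [mem_fixd] at hv
        have h0 : v j = -(v i) := by
          have := hv (i, true)
          rw [hjs] at this
          simp [hatv] at this
          linarith
        rw [mem_fixd]
        rintro ⟨m, u⟩
        rw [hT]
        by_cases h1 : m = i
        · subst h1; cases u <;> simp [hatv, h0] <;> ring
        · by_cases h2 : m = j
          · subst h2; cases u <;> simp [hatv, h0, h1] <;> ring
          · simp [h1, h2]
      have hlt : fixd w ≤ fixd (t * w) := fixd_le_of_le_fixt hmem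
      refine lt_of_le_of_ne hlt ?_
      intro heq
      have hei : (Pi.single i 1 : Fin n → ℝ) = Pi.single i 1 := rfl
      have h1 : (Pi.single i 1 : Fin n → ℝ) ∉ fixd w := by
        rw [mem_fixd]
        push_neg
        refine ⟨(i, true), ?_⟩
        rw [hjs, hatv_single, hatv_single]
        norm_num [hij, Ne.symm hij]
      have h2 : (Pi.single i 1 : Fin n → ℝ) ∈ fixd (t * w) := by
        rw [mem_fixd]
        rintro ⟨m, u⟩
        rw [Equiv.Perm.mul_apply]
        have hclaim : ∀ r : Fin n × Bool,
            hatv (Pi.single i 1 : Fin n → ℝ) (t r) = - hatv (Pi.single j 1) r := by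
          rintro ⟨m', u'⟩
          rw [hT]
          by_cases h : m' = i
          · subst h; cases u' <;> simp [hatv_single, hij, hij']
          · by_cases h2 : m' = j
            · subst h2; cases u' <;> simp [hatv_single, hij, hij']
            · simp [h, h2, hatv_single]
        rw [hclaim]
        by_cases hm : m = i
        · subst hm
          cases u
          · rw [hwf, hatv_single, hatv_single]; norm_num
          · rw [hjs, hatv_single, hatv_single]; norm_num
        · rcases hq : w (m, u) with ⟨m', u'⟩
          by_cases hm' : m' = j
          · exfalso
            rw [hm'] at hq
            cases u'
            · have : (m, u) = (i, true) := w.injective (by rw [hq, hjs])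
              exact hm (by injection this)
            · have : (m, u) = (i, false) := w.injective (by rw [hq, hwf])
              exact hm (by injection this)
          · rw [hatv_single, hatv_single]; simp [hm, hm']
      rw [← heq] at h2
      exact h1 h2
  · -- w (i,true) = (j,true), j ≠ i : t2 case
    have hij : i ≠ j := by
      rintro rfl
      exact hi hjs
    set t := Equiv.swap ((i,true) : Fin n × Bool) (j,true) *
      Equiv.swap ((i,false) : Fin n × Bool) (j,false) with htdef
    have hT := t2_apply i j hij
    refine ⟨t, Or.inr (Or.inl ⟨i, j, hij, rfl⟩), reflB_sq (Or.inr (Or.inl ⟨i, j, hij, rfl⟩)), ?_⟩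
    have hwf : w (i, false) = (j, false) := by
      have h1 := hw (i, true)
      rw [hjs] at h1
      exact h1
    have hmem : ∀ v, v ∈ fixd w → v ∈ fixd t := by
      intro v hv
      rw [mem_fixd] at hv
      have h0 : v j = v i := by
        have := hv (i, true)
        rw [hjs] at this
        simp [hatv] at this
        linarith
      rw [mem_fixd]
      rintro ⟨m, u⟩
      rw [hT]
      by_cases h1 : m = i
      · subst h1; cases u <;> simp [hatv, h0]
      · by_cases h2 : m = j
        · subst h2; cases u <;> simp [hatv, h0, h1]
        · simp [h1, h2]
    have hlt : fixd w ≤ fixd (t * w) := fixd_le_of_le_fixt hmem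
    refine lt_of_le_of_ne hlt ?_
    intro heq
    have hei : (Pi.single i 1 : Fin n → ℝ) = Pi.single i 1 := rfl
    have h1 : (Pi.single i 1 : Fin n → ℝ) ∉ fixd w := by
      rw [mem_fixd]
      push_neg
      refine ⟨(i, true), ?_⟩
      rw [hjs, hatv_single, hatv_single]
      norm_num [hij, Ne.symm hij]
    have h2 : (Pi.single i 1 : Fin n → ℝ) ∈ fixd (t * w) := by
      rw [mem_fixd]
      rintro ⟨m, u⟩
      rw [Equiv.Perm.mul_apply]
      have hclaim : ∀ r : Fin n × Bool,
          hatv (Pi.single i 1 : Fin n → ℝ) (t r) = hatv (Pi.single j 1) r := by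
        rintro ⟨m', u'⟩
        rw [hT]
        by_cases h : m' = i
        · subst h; cases u' <;> simp [hatv_single, hij, Ne.symm hij]
        · by_cases h2 : m' = j
          · subst h2; cases u' <;> simp [hatv_single, hij, Ne.symm hij]
          · simp [h, h2, hatv_single]
      rw [hclaim]
      by_cases hm : m = i
      · subst hm
        cases u
        · rw [hwf, hatv_single, hatv_single]; norm_num [hij, Ne.symm hij]
        · rw [hjs, hatv_single, hatv_single]; norm_num [hij, Ne.symm hij]
      · rcases hq : w (m, u) with ⟨m', u'⟩
        by_cases hm' : m' = j
        · exfalso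
          rw [hm'] at hq
          cases u'
          · have : (m, u) = (i, false) := w.injective (by rw [hq, hwf])
            exact hm (by injection this)
          · have : (m, u) = (i, true) := w.injective (by rw [hq, hjs])
            exact hm (by injection this)
        · rw [hatv_single, hatv_single]; simp [hm, hm']
    rw [← heq] at h2
    exact h1 h2

end Carter

section Length
variable {n : ℕ}

lemma exists_moved {w : Equiv.Perm (Fin n × Bool)} (hB : inB w) (hw : w ≠ 1) :
    ∃ i, w (i, true) ≠ (i, true) := by
  by_contra h
  push_neg at h
  apply hw
  apply Equiv.ext
  rintro ⟨m, s⟩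
  cases s
  · exact (hB.apply_negp_true (h m)).trans rfl
  · exact (h m).trans rfl

lemma dd_carter_lt {w t : Equiv.Perm (Fin n × Bool)}
    (h : fixd w < fixd (t * w)) : dd (t * w) < dd w := by
  have h1 : Module.finrank ℝ (fixd w) < Module.finrank ℝ (fixd (t * w)) :=
    Submodule.finrank_lt_finrank_of_lt h
  have h2 := finrank_fixd_le (t * w)
  unfold dd
  omega

lemma exists_word : ∀ (N : ℕ) (w : Equiv.Perm (Fin n × Bool)), dd w = N → inB w →
    ∃ l : List (Equiv.Perm (Fin n × Bool)),
      (∀ t ∈ l, t ∈ reflB n) ∧ l.prod = w ∧ l.length = dd w := by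
  intro N
  induction N using Nat.strong_induction_on with
  | _ N ih =>
    intro w hN hB
    by_cases h1 : w = 1
    · subst h1
      exact ⟨[], by simp, by simp, by simp [dd_one]⟩
    · obtain ⟨i, hi⟩ := exists_moved hB h1
      obtain ⟨t, ht, htt, hlt⟩ := carter hB hi
      have hddlt : dd (t * w) < dd w := dd_carter_lt hlt
      have hBtw : inB (t * w) := (reflB_inB ht).mul hB
      obtain ⟨l', hl', hprod', hlen'⟩ := ih (dd (t * w)) (hN ▸ hddlt) (t * w) rfl hBtw
      refine ⟨t :: l', ?_, ?_, ?_⟩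
      · intro x hx
        rcases List.mem_cons.mp hx with rfl | hx
        · exact ht
        · exact hl' x hx
      · rw [List.prod_cons, hprod', ← mul_assoc, htt, one_mul]
      · have hge : dd w ≤ 1 + dd (t * w) := by
          have : dd (t * (t * w)) ≤ dd t + dd (t * w) := dd_mul_le _ _
          rw [← mul_assoc, htt, one_mul] at this
          have h2 := reflB_dd_le ht
          omega
        simp only [List.length_cons, hlen']
        omega

lemma dd_prod_le (l : List (Equiv.Perm (Fin n × Bool))) (h : ∀ t ∈ l, t ∈ reflB n) :
    dd l.prod ≤ l.length := by
  induction l with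
  | nil => simp [dd_one]
  | cons x l ih =>
    rw [List.prod_cons]
    calc dd (x * l.prod) ≤ dd x + dd l.prod := dd_mul_le _ _
    _ ≤ 1 + l.length := by
        have := reflB_dd_le (h x (by simp))
        have := ih (fun t ht => h t (by simp [ht]))
        omega
    _ = (x :: l).length := by simp [add_comm]

lemma wordLen_eq_dd {w : Equiv.Perm (Fin n × Bool)} (hB : inB w) :
    wordLen (reflB n) w = dd w := by
  obtain ⟨l, hl, hprod, hlen⟩ := exists_word (dd w) w rfl hB
  apply le_antisymm
  · exact Nat.sInf_le ⟨l, hlen, hl, hprod⟩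
  · refine le_csInf ⟨dd w, l, hlen, hl, hprod⟩ ?_
    rintro k ⟨l', hlen', hl', hprod'⟩
    rw [← hlen', ← hprod']
    exact dd_prod_le l' hl'

lemma absLe_iff_dd {u v : Equiv.Perm (Fin n × Bool)} (hu : inB u) (hv : inB v) :
    absLe (reflB n) u v ↔ dd u + dd (u⁻¹ * v) = dd v := by
  unfold absLe
  rw [wordLen_eq_dd hu, wordLen_eq_dd (hu.inv.mul hv), wordLen_eq_dd hv]

lemma fixd_le_of_absLe {u v : Equiv.Perm (Fin n × Bool)} (hu : inB u) (hv : inB v)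
    (h : absLe (reflB n) u v) : fixd v ≤ fixd u := by
  rw [absLe_iff_dd hu hv] at h
  have hle : fixd u ⊓ fixd (u⁻¹ * v) ≤ fixd v := by
    have := fixd_mul_le (u := u) (v := u⁻¹ * v)
    rwa [← mul_assoc, mul_inv_cancel, one_mul] at this
  have h1 := Submodule.finrank_sup_add_finrank_inf_eq (fixd u) (fixd (u⁻¹ * v))
  have h2 : Module.finrank ℝ (fixd u ⊔ fixd (u⁻¹ * v) : Submodule ℝ (Fin n → ℝ)) ≤ n := by
    have := Submodule.finrank_le (fixd u ⊔ fixd (u⁻¹ * v))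
    simpa [Module.finrank_pi] using this
  have h3 := finrank_fixd_le u
  have h4 := finrank_fixd_le (u⁻¹ * v)
  have h5 := finrank_fixd_le v
  have h6 : Module.finrank ℝ (fixd v) ≤
      Module.finrank ℝ (fixd u ⊓ fixd (u⁻¹ * v) : Submodule ℝ (Fin n → ℝ)) := by
    unfold dd at h
    omega
  have := Submodule.eq_of_le_of_finrank_le hle h6
  rw [← this]
  exact inf_le_left

lemma dd_le_of_mul (u v : Equiv.Perm (Fin n × Bool)) : dd v ≤ dd u + dd (u⁻¹ * v) := by
  have := dd_mul_le u (u⁻¹ * v)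
  rwa [← mul_assoc, mul_inv_cancel, one_mul] at this

end Length

section ListPerm
variable {X : Type*}

lemma prod_fix (l : List (Equiv.Perm X)) (q : X) (h : ∀ x ∈ l, x q = q) :
    l.prod q = q := by
  induction l with
  | nil => rfl
  | cons x l ih =>
    rw [List.prod_cons, Equiv.Perm.mul_apply, ih (fun y hy => h y (by simp [hy])),
      h x (by simp)]

lemma ofFn_prod_apply {k : ℕ} (g : Fin k → Equiv.Perm X) (c : Fin k) (q : X)
    (h1 : ∀ i, i ≠ c → g i q = q) (h2 : ∀ i, i ≠ c → g i (g c q) = g c q) :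
    (List.ofFn g).prod q = g c q := by
  induction k with
  | zero => exact Fin.elim0 c
  | succ k ih =>
    rw [List.ofFn_succ, List.prod_cons, Equiv.Perm.mul_apply]
    rcases Fin.eq_zero_or_eq_succ c with rfl | ⟨c', rfl⟩
    · have hfix : (List.ofFn fun i => g i.succ).prod q = q := by
        refine prod_fix _ _ ?_
        intro x hx
        rw [List.mem_ofFn] at hx
        obtain ⟨i, rfl⟩ := hx
        exact h1 i.succ (Fin.succ_ne_zero i)
      rw [hfix]
    · rw [ih (fun i => g i.succ) c' (fun i hi => h1 i.succ (by simpa using hi))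
        (fun i hi => h2 i.succ (by simpa using hi)),
        h2 0 (by simp [Fin.succ_ne_zero, Ne.symm (Fin.succ_ne_zero c')])]

end ListPerm

section Blocks
variable {n k : ℕ}

/-- product of a family of permutations indexed by blocks -/
def prodB (g : Option (Fin k) → Equiv.Perm (Fin n × Bool)) : Equiv.Perm (Fin n × Bool) :=
  g none * (List.ofFn (fun c => g (some c))).prod

variable {A : Option (Fin k) → Set (Fin n)}
variable {g u v : Option (Fin k) → Equiv.Perm (Fin n × Bool)}

lemma prodB_inB (hg : ∀ β, inB (g β)) : inB (prodB g) := by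
  refine (hg none).mul (inB.prod ?_)
  intro x hx
  rw [List.mem_ofFn] at hx
  obtain ⟨c, rfl⟩ := hx
  exact hg (some c)

lemma listofFn_pairwise (hdisj : ∀ β β', β ≠ β' → Disjoint (A β) (A β')) :
    (List.ofFn (fun c => (g (some c), A (some c)))).Pairwise
      (fun x y => Disjoint x.2 y.2) := by
  rw [List.pairwise_ofFn]
  intro i j hij
  exact hdisj (some i) (some j) (by simpa using Fin.ne_of_lt hij)

lemma prodB_d_list (hdisj : ∀ β β', β ≠ β' → Disjoint (A β) (A β'))
    (hg : ∀ β, suppIn (g β) (A β)) :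
    suppIn (prodB g) (⋃ β, A β) ∧ dd (prodB g) = dd (g none) + ∑ c, dd (g (some c)) := by
  set L : List (Equiv.Perm (Fin n × Bool) × Set (Fin n)) :=
    (g none, A none) :: List.ofFn (fun c => (g (some c), A (some c))) with hL
  have hmem : ∀ x ∈ L, suppIn x.1 x.2 := by
    intro x hx
    rcases List.mem_cons.mp hx with rfl | hx
    · exact hg none
    · rw [List.mem_ofFn] at hx
      obtain ⟨c, rfl⟩ := hx
      exact hg (some c)
  have hpair : L.Pairwise (fun x y => Disjoint x.2 y.2) := by
    rw [hL, List.pairwise_cons]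
    refine ⟨?_, listofFn_pairwise hdisj⟩
    intro x hx
    rw [List.mem_ofFn] at hx
    obtain ⟨c, rfl⟩ := hx
    exact hdisj none (some c) (by simp)
  obtain ⟨hs, hd⟩ := d_list L hmem hpair
  have hmap : L.map Prod.fst = g none :: List.ofFn (fun c => g (some c)) := by
    rw [hL, List.map_cons, List.map_ofFn]
    rfl
  have hprod : (L.map Prod.fst).prod = prodB g := by rw [hmap, List.prod_cons]; rfl
  constructor
  · rw [hprod] at hs
    refine hs.mono ?_
    intro m hm
    rw [Set.mem_iUnion₂] at hm
    obtain ⟨x, hxL, hmx⟩ := hm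
    rw [Set.mem_iUnion]
    rcases List.mem_cons.mp hxL with rfl | hxL
    · exact ⟨none, hmx⟩
    · rw [List.mem_ofFn] at hxL
      obtain ⟨c, rfl⟩ := hxL
      exact ⟨some c, hmx⟩
  · rw [hprod] at hd
    rw [hd, hL, List.map_cons, List.map_ofFn, List.sum_cons]
    congr 1
    rw [List.sum_ofFn]
    rfl

lemma prodB_suppIn (hdisj : ∀ β β', β ≠ β' → Disjoint (A β) (A β'))
    (hg : ∀ β, suppIn (g β) (A β)) : suppIn (prodB g) (⋃ β, A β) :=
  (prodB_d_list hdisj hg).1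

lemma prodB_dd (hdisj : ∀ β β', β ≠ β' → Disjoint (A β) (A β'))
    (hg : ∀ β, suppIn (g β) (A β)) :
    dd (prodB g) = ∑ β : Option (Fin k), dd (g β) := by
  rw [(prodB_d_list hdisj hg).2, Fintype.sum_option]

lemma prodB_apply_out (hg : ∀ β, suppIn (g β) (A β)) {q : Fin n × Bool}
    (hq : ∀ β, q.1 ∉ A β) : prodB g q = q := by
  unfold prodB
  rw [Equiv.Perm.mul_apply]
  rw [prod_fix _ _ ?_, hg none q (hq none)]
  intro x hx
  rw [List.mem_ofFn] at hx
  obtain ⟨c, rfl⟩ := hx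
  exact hg (some c) q (hq (some c))

lemma prodB_apply_mem (hdisj : ∀ β β', β ≠ β' → Disjoint (A β) (A β'))
    (hg : ∀ β, suppIn (g β) (A β)) {q : Fin n × Bool} {β : Option (Fin k)}
    (hq : q.1 ∈ A β) : prodB g q = g β q := by
  have hnot : ∀ β', β' ≠ β → ∀ r : Fin n × Bool, r.1 ∈ A β → g β' r = r := by
    intro β' hβ' r hr
    exact hg β' r (fun hmem => (hdisj β' β hβ').ne_of_mem hmem hr rfl)
  unfold prodB
  rw [Equiv.Perm.mul_apply]
  cases β with
  | none =>
    rw [prod_fix _ _ ?_]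
    intro x hx
    rw [List.mem_ofFn] at hx
    obtain ⟨c, rfl⟩ := hx
    exact hnot (some c) (by simp) q hq
  | some c =>
    rw [ofFn_prod_apply _ c q
      (fun i hi => hnot (some i) (by simpa using hi) q hq)
      (fun i hi => hnot (some i) (by simpa using hi) _ ((hg (some c)).apply_mem hq)),
      hnot none (by simp) _ ((hg (some c)).apply_mem hq)]

lemma prodB_inv_apply_mem (hdisj : ∀ β β', β ≠ β' → Disjoint (A β) (A β'))
    (hg : ∀ β, suppIn (g β) (A β)) {r : Fin n × Bool} {β : Option (Fin k)}
    (hr : r.1 ∈ A β) : (prodB g)⁻¹ r = (g β)⁻¹ r := by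
  apply (prodB g).injective
  rw [Equiv.Perm.apply_inv_self,
    prodB_apply_mem hdisj hg ((hg β).inv.apply_mem hr), Equiv.Perm.apply_inv_self]

lemma prodB_inv_mul (hdisj : ∀ β β', β ≠ β' → Disjoint (A β) (A β'))
    (hu : ∀ β, suppIn (u β) (A β)) (hv : ∀ β, suppIn (v β) (A β)) :
    (prodB u)⁻¹ * prodB v = prodB (fun β => (u β)⁻¹ * v β) := by
  have hparts : ∀ β, suppIn ((u β)⁻¹ * v β) (A β) := fun β => (hu β).inv.mul (hv β)
  apply Equiv.ext
  intro q
  by_cases hq : ∃ β, q.1 ∈ A β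
  · obtain ⟨β, hβ⟩ := hq
    rw [Equiv.Perm.mul_apply, prodB_apply_mem hdisj hv hβ,
      prodB_inv_apply_mem hdisj hu ((hv β).apply_mem hβ),
      prodB_apply_mem hdisj hparts hβ]
    rfl
  · push_neg at hq
    rw [Equiv.Perm.mul_apply, prodB_apply_out hv hq,
      prodB_apply_out hparts hq]
    apply (prodB u).injective
    rw [Equiv.Perm.apply_inv_self, prodB_apply_out hu hq]

lemma absLe_prodB (hdisj : ∀ β β', β ≠ β' → Disjoint (A β) (A β'))
    (hu : ∀ β, suppIn (u β) (A β)) (hv : ∀ β, suppIn (v β) (A β))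
    (huB : ∀ β, inB (u β)) (hvB : ∀ β, inB (v β)) :
    absLe (reflB n) (prodB u) (prodB v) ↔ ∀ β, absLe (reflB n) (u β) (v β) := by
  have hparts : ∀ β, suppIn ((u β)⁻¹ * v β) (A β) := fun β => (hu β).inv.mul (hv β)
  rw [absLe_iff_dd (prodB_inB huB) (prodB_inB hvB), prodB_inv_mul hdisj hu hv,
    prodB_dd hdisj hu, prodB_dd hdisj hv, prodB_dd hdisj hparts]
  rw [← Finset.sum_add_distrib]
  have hpt : ∀ β ∈ Finset.univ, dd (v β) ≤ dd (u β) + dd ((u β)⁻¹ * v β) :=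
    fun β _ => dd_le_of_mul _ _
  rw [eq_comm, Finset.sum_eq_sum_iff_of_le hpt]
  constructor
  · intro h β
    rw [absLe_iff_dd (huB β) (hvB β)]
    exact (h β (Finset.mem_univ β)).symm
  · intro h β _
    exact ((absLe_iff_dd (huB β) (hvB β)).mp (h β)).symm

end Blocks

section Restrict
variable {n : ℕ}

lemma perm_invariant_iff {X : Type*} [Fintype X] (z : Equiv.Perm X) (P : Set X)
    (hm : ∀ q ∈ P, z q ∈ P) : ∀ q, q ∈ P ↔ z q ∈ P := by
  have himg : z '' P = P := by
    apply Set.eq_of_subset_of_ncard_le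
    · rintro r ⟨q, hq, rfl⟩
      exact hm q hq
    · rw [Set.ncard_image_of_injective P z.injective]
    · exact P.toFinite
  intro q
  refine ⟨hm q, fun hq => ?_⟩
  rw [← himg] at hq
  obtain ⟨q', hq', heq⟩ := hq
  rwa [← z.injective heq]

/-- restriction of a permutation to an invariant set -/
noncomputable def restr (z : Equiv.Perm (Fin n × Bool)) (P : Set (Fin n × Bool))
    (hm : ∀ q ∈ P, z q ∈ P) : Equiv.Perm (Fin n × Bool) :=
  Equiv.Perm.ofSubtype (z.subtypePerm (fun q => (perm_invariant_iff z P hm q).symm))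

lemma restr_apply_mem {z : Equiv.Perm (Fin n × Bool)} {P : Set (Fin n × Bool)}
    {hm : ∀ q ∈ P, z q ∈ P} {q : Fin n × Bool} (hq : q ∈ P) :
    restr z P hm q = z q := by
  unfold restr
  rw [Equiv.Perm.ofSubtype_apply_of_mem _ hq]
  rfl

lemma restr_apply_not_mem {z : Equiv.Perm (Fin n × Bool)} {P : Set (Fin n × Bool)}
    {hm : ∀ q ∈ P, z q ∈ P} {q : Fin n × Bool} (hq : q ∉ P) :
    restr z P hm q = q := by
  unfold restr
  rw [Equiv.Perm.ofSubtype_apply_of_not_mem _ hq]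

lemma restr_suppIn {z : Equiv.Perm (Fin n × Bool)} {S : Set (Fin n)}
    {hm : ∀ q ∈ {q : Fin n × Bool | q.1 ∈ S}, z q ∈ {q : Fin n × Bool | q.1 ∈ S}} :
    suppIn (restr z {q : Fin n × Bool | q.1 ∈ S} hm) S := by
  intro q hq
  exact restr_apply_not_mem hq

lemma restr_inB {z : Equiv.Perm (Fin n × Bool)} {S : Set (Fin n)} (hz : inB z)
    {hm : ∀ q ∈ {q : Fin n × Bool | q.1 ∈ S}, z q ∈ {q : Fin n × Bool | q.1 ∈ S}} :
    inB (restr z {q : Fin n × Bool | q.1 ∈ S} hm) := by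
  intro q
  by_cases hq : q.1 ∈ S
  · rw [restr_apply_mem (by simpa using hq), restr_apply_mem hq, hz q]
  · rw [restr_apply_not_mem (by simpa using hq), restr_apply_not_mem hq]

/-- restriction of a block product recovers the factors -/
lemma restr_prodB {k : ℕ} {A : Option (Fin k) → Set (Fin n)}
    {g : Option (Fin k) → Equiv.Perm (Fin n × Bool)}
    (hdisj : ∀ β β', β ≠ β' → Disjoint (A β) (A β'))
    (hg : ∀ β, suppIn (g β) (A β)) (β : Option (Fin k))
    (hm : ∀ q ∈ {q : Fin n × Bool | q.1 ∈ A β}, prodB g q ∈ {q : Fin n × Bool | q.1 ∈ A β}) :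
    restr (prodB g) {q : Fin n × Bool | q.1 ∈ A β} hm = g β := by
  apply Equiv.ext
  intro q
  by_cases hq : q.1 ∈ A β
  · rw [restr_apply_mem hq, prodB_apply_mem hdisj hg hq]
  · rw [restr_apply_not_mem hq, hg β q hq]

end Restrict

section SinglesPhi
variable {n : ℕ}

/-- moved indices -/
def mvIdx {n : ℕ} (x : Equiv.Perm (Fin n × Bool)) : Set (Fin n) := {i | x (i,true) ≠ (i,true)}

lemma suppIn_mvIdx {x : Equiv.Perm (Fin n × Bool)} (hx : inB x) : suppIn x (mvIdx x) := by
  rintro ⟨i, s⟩ hi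
  simp only [mvIdx, Set.mem_setOf_eq, not_not] at hi
  cases s
  · exact hx.apply_negp_true hi
  · exact hi

lemma single_mem_fixd_of_fixes {z : Equiv.Perm (Fin n × Bool)} {i : Fin n}
    (h : ∀ s, z (i, s) = (i, s)) : (Pi.single i 1 : Fin n → ℝ) ∈ fixd z := by
  rw [mem_fixd]
  rintro ⟨m, u⟩
  by_cases hm : m = i
  · subst hm
    rw [h u]
  · rcases hq : z (m, u) with ⟨m', u'⟩
    have hm' : m' ≠ i := by
      rintro rfl
      have h2 : z (m', u') = (m', u') := h u'
      have := z.injective (hq.trans h2.symm)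
      exact hm (congrArg Prod.fst this)
    rw [hatv_single, hatv_single, if_neg hm', if_neg hm]

lemma fixes_of_single_mem {z : Equiv.Perm (Fin n × Bool)} {i : Fin n}
    (h : (Pi.single i 1 : Fin n → ℝ) ∈ fixd z) (s : Bool) : z (i, s) = (i, s) := by
  rw [mem_fixd] at h
  have hs := h (i, s)
  rcases hq : z (i, s) with ⟨m', u'⟩
  rw [hq] at hs
  rw [hatv_single, hatv_single, if_pos rfl] at hs
  by_cases hm : m' = i
  · rw [if_pos hm] at hs
    have hu : u' = s := by
      cases s <;> cases u' <;> first | rfl | (exfalso; norm_num at hs)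
    rw [hm, hu]
  · rw [if_neg hm] at hs
    exfalso
    cases s <;> norm_num at hs

/-- elements below y in absolute order have support inside that of y -/
lemma suppIn_of_absLe {x y : Equiv.Perm (Fin n × Bool)} (hxB : inB x) (hyB : inB y)
    (habs : absLe (reflB n) x y) : suppIn x (mvIdx y) := by
  rintro ⟨i, s⟩ hi
  simp only [mvIdx, Set.mem_setOf_eq, not_not] at hi
  have h1 : (Pi.single i 1 : Fin n → ℝ) ∈ fixd y := by
    apply single_mem_fixd_of_fixes
    intro s'
    cases s'
    · exact hyB.apply_negp_true hi
    · exact hi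
  exact fixes_of_single_mem (fixd_le_of_absLe hxB hyB habs h1) s

lemma fixd_prod_ge {l : List (Equiv.Perm (Fin n × Bool))} {v : Fin n → ℝ}
    (h : ∀ x ∈ l, v ∈ fixd x) : v ∈ fixd l.prod := by
  induction l with
  | nil => rw [mem_fixd]; intro q; rfl
  | cons x l ih =>
    rw [List.prod_cons]
    exact fixd_mul_le ⟨h x (by simp), ih (fun y hy => h y (by simp [hy]))⟩

end SinglesPhi

section Orbit
variable {n : ℕ} {pc : Equiv.Perm (Fin n × Bool)} {O : Set (Fin n × Bool)}

lemma negp_inj {a b : Fin n × Bool} (h : negp a = negp b) : a = b := by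
  have := congrArg negp h
  rwa [negp_negp, negp_negp] at this

lemma mem_negO {q : Fin n × Bool} : q ∈ negp '' O ↔ negp q ∈ O := by
  constructor
  · rintro ⟨o, ho, rfl⟩
    rwa [negp_negp]
  · intro h
    exact ⟨negp q, h, negp_negp q⟩

lemma moved_of_mem_O (hO : isOrbit pc O) (hcard : 2 ≤ Nat.card O)
    {q : Fin n × Bool} (hq : q ∈ O) : pc q ≠ q := by
  intro hfix
  obtain ⟨pt, rfl⟩ := hO
  have hsub : {r | pc.SameCycle pt r} ⊆ {q} := by
    intro r hr
    have h1 : pc.SameCycle q r := (Equiv.Perm.SameCycle.symm hq).trans hr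
    have := (h1.symm).eq_of_right hfix
    simp [this.symm]
  have hle : Nat.card {r | pc.SameCycle pt r} ≤ 1 := by
    rw [Nat.card_coe_set_eq]
    calc Set.ncard {r | pc.SameCycle pt r} ≤ Set.ncard {q} :=
      Set.ncard_le_ncard hsub (Set.finite_singleton q)
    _ = 1 := Set.ncard_singleton q
  omega

lemma mem_O_apply (hO : isOrbit pc O) {q : Fin n × Bool} (hq : q ∈ O) : pc q ∈ O := by
  obtain ⟨pt, rfl⟩ := hO
  exact Equiv.Perm.SameCycle.apply_right hq

lemma mem_negO_apply (hpcB : inB pc) (hO : isOrbit pc O) {q : Fin n × Bool}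
    (hq : q ∈ negp '' O) : pc q ∈ negp '' O := by
  obtain ⟨o, ho, rfl⟩ := hq
  rw [hpcB o]
  exact ⟨pc o, mem_O_apply hO ho, rfl⟩

lemma moved_of_mem_negO (hpcB : inB pc) (hO : isOrbit pc O) (hcard : 2 ≤ Nat.card O)
    {q : Fin n × Bool} (hq : q ∈ negp '' O) : pc q ≠ q := by
  obtain ⟨o, ho, rfl⟩ := hq
  rw [hpcB o]
  intro h
  exact moved_of_mem_O hO hcard ho (negp_inj h)

lemma mem_mvIdx_iff (hpcB : inB pc) (hO : isOrbit pc O) (hcard : 2 ≤ Nat.card O)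
    (hfixO : ∀ q, q ∉ O → q ∉ negp '' O → pc q = q) (i : Fin n) :
    i ∈ mvIdx pc ↔ (i, true) ∈ O ∪ negp '' O := by
  constructor
  · intro hi
    by_contra h
    rw [Set.mem_union] at h
    push_neg at h
    exact hi (hfixO _ h.1 h.2)
  · rintro (h | h)
    · exact moved_of_mem_O hO hcard h
    · exact moved_of_mem_negO hpcB hO hcard h

lemma mem_union_negp_iff {q : Fin n × Bool} :
    negp q ∈ O ∪ negp '' O ↔ q ∈ O ∪ negp '' O := by
  simp only [Set.mem_union, mem_negO, negp_negp]
  tauto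

lemma mem_union_false_iff (i : Fin n) :
    ((i, false) : Fin n × Bool) ∈ O ∪ negp '' O ↔ (i, true) ∈ O ∪ negp '' O := by
  have : ((i, false) : Fin n × Bool) = negp (i, true) := rfl
  rw [this, mem_union_negp_iff]

/-- the sign vector of a paired cycle -/
noncomputable def phiO (O : Set (Fin n × Bool)) : Fin n → ℝ :=
  fun i => if (i, true) ∈ O then 1 else if (i, false) ∈ O then -1 else 0

lemma hatv_phiO (hdisjO : (negp '' O) ∩ O = ∅) (r : Fin n × Bool) :
    hatv (phiO O) r = if r ∈ O then 1 else if r ∈ negp '' O then -1 else 0 := by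
  have hOD : ∀ a : Fin n × Bool, a ∈ O → negp a ∉ O := by
    intro a ha hna
    have : negp a ∈ (negp '' O) ∩ O := ⟨⟨a, ha, rfl⟩, hna⟩
    rw [hdisjO] at this
    exact this
  rcases r with ⟨i, s⟩
  cases s
  · unfold hatv
    show (-1 : ℝ) * phiO O i = _
    unfold phiO
    by_cases h1 : (i, true) ∈ O
    · have h2 : ((i, false) : Fin n × Bool) ∉ O := hOD (i, true) h1
      have h3 : ((i, false) : Fin n × Bool) ∈ negp '' O := ⟨(i, true), h1, rfl⟩
      rw [if_pos h1, if_neg h2, if_pos h3]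
      norm_num
    · by_cases h2 : ((i, false) : Fin n × Bool) ∈ O
      · rw [if_neg h1, if_pos h2, if_pos h2]
        norm_num
      · have h4 : ((i, false) : Fin n × Bool) ∉ negp '' O := by
          rw [mem_negO]
          exact h1
        rw [if_neg h1, if_neg h2, if_neg h2, if_neg h4]
        norm_num
  · unfold hatv
    show (1 : ℝ) * phiO O i = _
    unfold phiO
    by_cases h1 : (i, true) ∈ O
    · rw [if_pos h1, if_pos h1]
      norm_num
    · by_cases h2 : ((i, false) : Fin n × Bool) ∈ O
      · have h4 : ((i, true) : Fin n × Bool) ∈ negp '' O := mem_negO.mpr h2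
        rw [if_neg h1, if_pos h2, if_neg h1, if_pos h4]
        norm_num
      · have h4 : ((i, true) : Fin n × Bool) ∉ negp '' O := by
          rw [mem_negO]
          exact h2
        rw [if_neg h1, if_neg h2, if_neg h1, if_neg h4]
        norm_num

lemma phiO_mem_fixd (hpcB : inB pc) (hO : isOrbit pc O)
    (hdisjO : (negp '' O) ∩ O = ∅) (hfixO : ∀ q, q ∉ O → q ∉ negp '' O → pc q = q) :
    phiO O ∈ fixd pc := by
  rw [mem_fixd]
  intro q
  rw [hatv_phiO hdisjO, hatv_phiO hdisjO]
  by_cases h1 : q ∈ O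
  · have h2 : pc q ∈ O := mem_O_apply hO h1
    simp [h1, h2]
  · by_cases h2 : q ∈ negp '' O
    · have h3 : pc q ∈ negp '' O := mem_negO_apply hpcB hO h2
      have h4 : pc q ∉ O := by
        intro h
        have : pc q ∈ (negp '' O) ∩ O := ⟨h3, h⟩
        rw [hdisjO] at this
        exact this
      simp [h1, h2, h4, h3]
    · rw [hfixO q h1 h2]

lemma phiO_zero_off (hpcB : inB pc) (hO : isOrbit pc O) (hcard : 2 ≤ Nat.card O)
    (hfixO : ∀ q, q ∉ O → q ∉ negp '' O → pc q = q) :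
    ∀ m, m ∉ mvIdx pc → phiO O m = 0 := by
  intro m hm
  rw [mem_mvIdx_iff hpcB hO hcard hfixO] at hm
  unfold phiO
  have h1 : (m, true) ∉ O := fun h => hm (Or.inl h)
  have h2 : ((m, false) : Fin n × Bool) ∉ O := by
    intro h
    apply hm
    rw [← mem_union_false_iff]
    exact Or.inl h
  simp [h1, h2]

end Orbit


section Final
variable {n k : ℕ}

lemma fixd_prodB_ge {g : Option (Fin k) → Equiv.Perm (Fin n × Bool)} {v : Fin n → ℝ}
    (h : ∀ β, v ∈ fixd (g β)) : v ∈ fixd (prodB g) := by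
  unfold prodB
  refine fixd_mul_le ⟨h none, fixd_prod_ge ?_⟩
  intro y hy
  rw [List.mem_ofFn] at hy
  obtain ⟨c, rfl⟩ := hy
  exact h (some c)

lemma blocks_equiv {A : Option (Fin k) → Set (Fin n)}
    {W : Option (Fin k) → Equiv.Perm (Fin n × Bool)}
    (hdisjA : ∀ β β', β ≠ β' → Disjoint (A β) (A β'))
    (hsuppW : ∀ β, suppIn (W β) (A β))
    (hWB : ∀ β, inB (W β))
    (hPull : ∀ x : Equiv.Perm (Fin n × Bool), inB x → absLe (reflB n) x (prodB W) →
      ∀ (c : Fin k) (q : Fin n × Bool), (x q).1 ∈ A (some c) → q.1 ∈ A (some c)) :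
    ∃ f : {z : Equiv.Perm (Fin n × Bool) // inB z ∧ absLe (reflB n) z (prodB W)} ≃
        ({z : Equiv.Perm (Fin n × Bool) // inB z ∧ absLe (reflB n) z (W none)} ×
          ∀ i : Fin k, {z : Equiv.Perm (Fin n × Bool) // inB z ∧ absLe (reflB n) z (W (some i))}),
      ∀ x y, absLe (reflB n) x.1 y.1 ↔
        (absLe (reflB n) (f x).1.1 (f y).1.1 ∧
          ∀ i, absLe (reflB n) ((f x).2 i).1 ((f y).2 i).1) := by
  classical
  have hWprodB : inB (prodB W) := prodB_inB hWB
  have hmvsub : ∀ β, mvIdx (W β) ⊆ A β := by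
    intro β i hi
    by_contra h
    exact hi (hsuppW β (i, true) h)
  have hleft : ∀ x, inB x → absLe (reflB n) x (prodB W) →
      ∀ q : Fin n × Bool, (∀ β, q.1 ∉ A β) → x q = q := by
    intro x hxB habs q hq
    rcases q with ⟨i, s⟩
    have hsW : (Pi.single i 1 : Fin n → ℝ) ∈ fixd (prodB W) := by
      refine fixd_prodB_ge ?_
      intro β
      apply single_mem_fixd_of_fixes
      intro s'
      exact hsuppW β (i, s') (hq β)
    exact fixes_of_single_mem (fixd_le_of_absLe hxB hWprodB habs hsW) s
  have hmaps : ∀ x, inB x → absLe (reflB n) x (prodB W) →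
      ∀ β, ∀ q ∈ {q : Fin n × Bool | q.1 ∈ A β}, x q ∈ {q : Fin n × Bool | q.1 ∈ A β} := by
    intro x hxB habs
    have hleftx : ∀ q : Fin n × Bool, (∀ β, (x q).1 ∉ A β) → x q = q := by
      intro q hq
      exact x.injective (hleft x hxB habs (x q) hq)
    have hnone : ∀ q : Fin n × Bool, q.1 ∈ A none → (x q).1 ∈ A none := by
      intro q hq
      by_cases hd : ∃ c, (x q).1 ∈ A (some c)
      · obtain ⟨c, hc⟩ := hd
        exact absurd (hPull x hxB habs c q hc)
          (fun h => (hdisjA none (some c) (by simp)).ne_of_mem hq h rfl)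
      · push_neg at hd
        by_cases hn : (x q).1 ∈ A none
        · exact hn
        · exfalso
          have hx : x q = q := hleftx q (by rintro (_ | c); exacts [hn, hd c])
          exact hn (by rw [hx]; exact hq)
    rintro (_ | c) q hq
    · exact hnone q hq
    · show (x q).1 ∈ A (some c)
      by_contra hxq
      by_cases hn : (x q).1 ∈ A none
      · have hqn : q.1 ∈ A none :=
          (perm_invariant_iff x {q : Fin n × Bool | q.1 ∈ A none} hnone q).mpr hn
        exact (hdisjA none (some c) (by simp)).ne_of_mem hqn hq rfl
      · by_cases hd : ∃ c', (x q).1 ∈ A (some c')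
        · obtain ⟨c', hc'⟩ := hd
          have hq' : q.1 ∈ A (some c') := hPull x hxB habs c' q hc'
          by_cases hcc : c' = c
          · exact hxq (hcc ▸ hc')
          · exact (hdisjA (some c') (some c) (by simp [hcc])).ne_of_mem hq' hq rfl
        · push_neg at hd
          have hx : x q = q := hleftx q (by rintro (_ | c'); exacts [hn, hd c'])
          exact hxq (by rw [hx]; exact hq)
  have hpartsupp : ∀ x (hxB : inB x) (habs : absLe (reflB n) x (prodB W)) (β),
      suppIn (restr x {q : Fin n × Bool | q.1 ∈ A β} (hmaps x hxB habs β)) (A β) :=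
    fun x hxB habs β => restr_suppIn
  have hpartinB : ∀ x (hxB : inB x) (habs : absLe (reflB n) x (prodB W)) (β),
      inB (restr x {q : Fin n × Bool | q.1 ∈ A β} (hmaps x hxB habs β)) :=
    fun x hxB habs β => restr_inB hxB
  have hdecomp : ∀ x (hxB : inB x) (habs : absLe (reflB n) x (prodB W)),
      prodB (fun β => restr x {q : Fin n × Bool | q.1 ∈ A β} (hmaps x hxB habs β)) = x := by
    intro x hxB habs
    apply Equiv.ext
    intro q
    by_cases hq : ∃ β, q.1 ∈ A β
    · obtain ⟨β, hβ⟩ := hq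
      rw [prodB_apply_mem hdisjA (hpartsupp x hxB habs) hβ, restr_apply_mem hβ]
    · push_neg at hq
      rw [prodB_apply_out (hpartsupp x hxB habs) hq, hleft x hxB habs q hq]
  have hFmem : ∀ x (hxB : inB x) (habs : absLe (reflB n) x (prodB W)) (β),
      absLe (reflB n) (restr x {q : Fin n × Bool | q.1 ∈ A β} (hmaps x hxB habs β)) (W β) := by
    intro x hxB habs β
    refine ((absLe_prodB hdisjA (hpartsupp x hxB habs) hsuppW
      (hpartinB x hxB habs) hWB).mp ?_) β
    rw [hdecomp x hxB habs]
    exact habs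
  have hGsupp : ∀ (y : {z : Equiv.Perm (Fin n × Bool) // inB z ∧ absLe (reflB n) z (W none)} ×
      ∀ i : Fin k, {z : Equiv.Perm (Fin n × Bool) // inB z ∧ absLe (reflB n) z (W (some i))}) (β),
      suppIn (Option.elim β y.1.1 (fun c => (y.2 c).1)) (A β) := by
    rintro y (_ | c)
    · exact (suppIn_of_absLe y.1.2.1 (hWB none) y.1.2.2).mono (hmvsub none)
    · exact (suppIn_of_absLe (y.2 c).2.1 (hWB (some c)) (y.2 c).2.2).mono (hmvsub (some c))
  have hGinB : ∀ (y : {z : Equiv.Perm (Fin n × Bool) // inB z ∧ absLe (reflB n) z (W none)} ×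
      ∀ i : Fin k, {z : Equiv.Perm (Fin n × Bool) // inB z ∧ absLe (reflB n) z (W (some i))}) (β),
      inB (Option.elim β y.1.1 (fun c => (y.2 c).1)) := by
    rintro y (_ | c)
    · exact y.1.2.1
    · exact (y.2 c).2.1
  have hGmem : ∀ (y : {z : Equiv.Perm (Fin n × Bool) // inB z ∧ absLe (reflB n) z (W none)} ×
      ∀ i : Fin k, {z : Equiv.Perm (Fin n × Bool) // inB z ∧ absLe (reflB n) z (W (some i))}),
      inB (prodB (fun β => Option.elim β y.1.1 (fun c => (y.2 c).1))) ∧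
      absLe (reflB n) (prodB (fun β => Option.elim β y.1.1 (fun c => (y.2 c).1))) (prodB W) := by
    intro y
    refine ⟨prodB_inB (hGinB y), ?_⟩
    refine (absLe_prodB hdisjA (hGsupp y) hsuppW (hGinB y) hWB).mpr ?_
    rintro (_ | c)
    · exact y.1.2.2
    · exact (y.2 c).2.2
  refine ⟨⟨fun x => (⟨restr x.1 {q : Fin n × Bool | q.1 ∈ A none} (hmaps x.1 x.2.1 x.2.2 none),
        hpartinB x.1 x.2.1 x.2.2 none, hFmem x.1 x.2.1 x.2.2 none⟩,
      fun c => ⟨restr x.1 {q : Fin n × Bool | q.1 ∈ A (some c)} (hmaps x.1 x.2.1 x.2.2 (some c)),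
        hpartinB x.1 x.2.1 x.2.2 (some c), hFmem x.1 x.2.1 x.2.2 (some c)⟩),
    fun y => ⟨prodB (fun β => Option.elim β y.1.1 (fun c => (y.2 c).1)),
      (hGmem y).1, (hGmem y).2⟩, ?_, ?_⟩, ?_⟩
  · intro x
    apply Subtype.ext
    show prodB (fun β => Option.elim β
        (restr x.1 {q : Fin n × Bool | q.1 ∈ A none} (hmaps x.1 x.2.1 x.2.2 none))
        (fun c => restr x.1 {q : Fin n × Bool | q.1 ∈ A (some c)}
          (hmaps x.1 x.2.1 x.2.2 (some c)))) = x.1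
    refine Eq.trans ?_ (hdecomp x.1 x.2.1 x.2.2)
    congr 1
    funext β
    cases β <;> rfl
  · intro y
    have hy : ∀ β, suppIn (Option.elim β y.1.1 (fun c => (y.2 c).1)) (A β) := hGsupp y
    refine Prod.ext ?_ ?_
    · apply Subtype.ext
      exact restr_prodB hdisjA hy none (hmaps _ (hGmem y).1 (hGmem y).2 none)
    · funext c
      apply Subtype.ext
      exact restr_prodB hdisjA hy (some c) (hmaps _ (hGmem y).1 (hGmem y).2 (some c))
  · intro x y
    have hiff := absLe_prodB (n := n)
      (u := fun β => restr x.1 {q : Fin n × Bool | q.1 ∈ A β} (hmaps x.1 x.2.1 x.2.2 β))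
      (v := fun β => restr y.1 {q : Fin n × Bool | q.1 ∈ A β} (hmaps y.1 y.2.1 y.2.2 β))
      hdisjA (hpartsupp x.1 x.2.1 x.2.2) (hpartsupp y.1 y.2.1 y.2.2)
      (hpartinB x.1 x.2.1 x.2.2) (hpartinB y.1 y.2.1 y.2.2)
    rw [hdecomp x.1 x.2.1 x.2.2, hdecomp y.1 y.2.1 y.2.2] at hiff
    rw [hiff]
    constructor
    · intro h
      exact ⟨h none, fun c => h (some c)⟩
    · rintro ⟨h1, h2⟩ (_ | c)
      · exact h1
      · exact h2 c

end Final

/-- let `w = b · p_1 ⋯ p_k ∈ B_n`, where `b` is the product of the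
balanced cycles of `w` (every non-fixed point of `b` lies in a negation-stable
orbit) and `p_1, …, p_k` are the disjoint (nontrivial) paired cycles of `w`, all
factors having pairwise disjoint supports.  Then the interval `[e,w]` of `Abs(B_n)`
is isomorphic, as a poset, to the direct product `[e,b] × [e,p_1] × ⋯ × [e,p_k]`. -/
theorem stmt_18 (n k : ℕ) (w b : Equiv.Perm (Fin n × Bool))
    (p : Fin k → Equiv.Perm (Fin n × Bool))
    (hb : inB b) (hp : ∀ i, inB (p i))
    (hbbal : ∀ q, b q ≠ q →
      negp '' {x | b.SameCycle q x} = {x | b.SameCycle q x})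
    (hpc : ∀ i, ∃ O : Set (Fin n × Bool), isOrbit (p i) O ∧ 2 ≤ Nat.card O ∧
      (negp '' O) ∩ O = ∅ ∧ ∀ q, q ∉ O → q ∉ negp '' O → (p i) q = q)
    (hdisj₁ : ∀ i, ∀ q, b q ≠ q → (p i) q = q)
    (hdisj₂ : ∀ i j, i ≠ j → ∀ q, (p i) q ≠ q → (p j) q = q)
    (hw : w = b * (List.ofFn p).prod) :
    ∃ f : {z : Equiv.Perm (Fin n × Bool) // inB z ∧ absLe (reflB n) z w} ≃
        ({z : Equiv.Perm (Fin n × Bool) // inB z ∧ absLe (reflB n) z b} ×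
          ∀ i : Fin k, {z : Equiv.Perm (Fin n × Bool) // inB z ∧ absLe (reflB n) z (p i)}),
      ∀ x y, absLe (reflB n) x.1 y.1 ↔
        (absLe (reflB n) (f x).1.1 (f y).1.1 ∧
          ∀ i, absLe (reflB n) ((f x).2 i).1 ((f y).2 i).1) := by
  classical
  subst hw
  choose O hOrb hOcard hOdisj hOfix using hpc
  set A : Option (Fin k) → Set (Fin n) :=
    fun β => Option.elim β (mvIdx b) (fun c => mvIdx (p c)) with hA
  set W : Option (Fin k) → Equiv.Perm (Fin n × Bool) :=
    fun β => Option.elim β b p with hW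
  have hWB : ∀ β, inB (W β) := by rintro (_ | c); exacts [hb, hp c]
  have hsuppW : ∀ β, suppIn (W β) (A β) := by
    rintro (_ | c)
    · exact suppIn_mvIdx hb
    · exact suppIn_mvIdx (hp c)
  have hmv : ∀ (x : Equiv.Perm (Fin n × Bool)) (i : Fin n), i ∈ mvIdx x ↔ x (i, true) ≠ (i, true) :=
    fun x i => Iff.rfl
  have hbc : ∀ c : Fin k, Disjoint (mvIdx b) (mvIdx (p c)) := by
    intro c
    rw [Set.disjoint_left]
    intro i hib hic
    exact hic (hdisj₁ c (i, true) hib)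
  have hdisjA : ∀ β β', β ≠ β' → Disjoint (A β) (A β') := by
    have hcc : ∀ c c' : Fin k, c ≠ c' → Disjoint (mvIdx (p c)) (mvIdx (p c')) := by
      intro c c' hne
      rw [Set.disjoint_left]
      intro i hic hic'
      exact hic' (hdisj₂ c c' hne (i, true) hic)
    rintro (_ | c) (_ | c') hne
    · exact absurd rfl hne
    · exact hbc c'
    · exact (hbc c).symm
    · exact hcc c c' (fun h => hne (by rw [h]))
  have hWprodB : inB (prodB W) := prodB_inB hWB
  have hOmem : ∀ (c : Fin k) (q : Fin n × Bool),
      q ∈ O c ∪ negp '' O c ↔ q.1 ∈ mvIdx (p c) := by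
    intro c q
    rcases q with ⟨i, s⟩
    cases s
    · exact (mem_union_false_iff i).trans
        (mem_mvIdx_iff (hp c) (hOrb c) (hOcard c) (hOfix c) i).symm
    · exact (mem_mvIdx_iff (hp c) (hOrb c) (hOcard c) (hOfix c) i).symm
  have hphiA : ∀ (c : Fin k) (r : Fin n × Bool), r.1 ∈ mvIdx (p c) →
      hatv (phiO (O c)) r ≠ 0 := by
    intro c r hr
    rw [hatv_phiO (hOdisj c)]
    by_cases h1 : r ∈ O c
    · rw [if_pos h1]; norm_num
    · have h2 : r ∈ negp '' O c := ((hOmem c r).mpr hr).resolve_left h1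
      rw [if_neg h1, if_pos h2]; norm_num
  have hphi0 : ∀ (c : Fin k) (r : Fin n × Bool), r.1 ∉ mvIdx (p c) →
      hatv (phiO (O c)) r = 0 := by
    intro c r hr
    rw [hatv_phiO (hOdisj c)]
    have h1 : r ∉ O c := fun h => hr ((hOmem c r).mp (Or.inl h))
    have h2 : r ∉ negp '' O c := fun h => hr ((hOmem c r).mp (Or.inr h))
    rw [if_neg h1, if_neg h2]
  have hphiW : ∀ c : Fin k, phiO (O c) ∈ fixd (prodB W) := by
    intro c
    refine fixd_prodB_ge ?_
    rintro (_ | c')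
    · refine mem_fixd_of_zero_on (suppIn_mvIdx hb) (fun m hm => ?_)
      refine phiO_zero_off (hp c) (hOrb c) (hOcard c) (hOfix c) m ?_
      intro hmc
      exact (hbc c).ne_of_mem hm hmc rfl
    · by_cases hcc : c' = c
      · subst hcc
        exact phiO_mem_fixd (hp c') (hOrb c') (hOdisj c') (hOfix c')
      · refine mem_fixd_of_zero_on (suppIn_mvIdx (hp c')) (fun m hm => ?_)
        refine phiO_zero_off (hp c) (hOrb c) (hOcard c) (hOfix c) m ?_
        intro hmc
        exact (hdisjA (some c') (some c) (by simp [hcc])).ne_of_mem hm hmc rfl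
  have hPull : ∀ x : Equiv.Perm (Fin n × Bool), inB x → absLe (reflB n) x (prodB W) →
      ∀ (c : Fin k) (q : Fin n × Bool), (x q).1 ∈ A (some c) → q.1 ∈ A (some c) := by
    intro x hxB habs c q hxq
    by_contra hq
    have hfx : phiO (O c) ∈ fixd x :=
      fixd_le_of_absLe hxB hWprodB habs (hphiW c)
    have h1 : hatv (phiO (O c)) (x q) = hatv (phiO (O c)) q := (mem_fixd.mp hfx) q
    rw [hphi0 c q hq] at h1
    exact hphiA c (x q) hxq h1
  obtain ⟨f, hf⟩ := blocks_equiv hdisjA hsuppW hWB hPull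
  exact ⟨f, hf⟩
end

section
/- Let π_n: S_n → S_n send a permutation w to the permutation obtained by deleting n from the cycle of w containing it (so π_n(w) fixes n). Then π_n(w) ⪯ w in the absolute order, and π_n is order-preserving: u ⪯ v implies π_n(u) ⪯ π_n(v). -/
open scoped Classical

/-- The projection `π_n : S_n → S_n` deleting the letter `n` (here the last
element of `Fin (n+1)`) from the cycle of `w` containing it:
`π_n(w) = w ∘ (w⁻¹(n), n)`, so that `π_n(w)(i) = w(i)` if `w(i) ≠ n`,
`π_n(w)(i) = w(n)` if `w(i) = n ≠ i`, and `π_n(w)(n) = n`. -/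
def πdel (n : ℕ) (w : Equiv.Perm (Fin (n + 1))) : Equiv.Perm (Fin (n + 1)) :=
  w * Equiv.swap (w⁻¹ (Fin.last n)) (Fin.last n)

namespace Stmt19

open Equiv Equiv.Perm Module

variable {n : ℕ}

abbrev V (n : ℕ) := Fin (n + 1) → ℚ

def FixS (w : Equiv.Perm (Fin (n + 1))) : Submodule ℚ (V n) where
  carrier := {v | ∀ i, v (w i) = v i}
  add_mem' := fun ha hb i => by simp only [Pi.add_apply, ha i, hb i]
  zero_mem' := fun i => rfl
  smul_mem' := fun c v hv i => by simp only [Pi.smul_apply, hv i]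

lemma mem_FixS {w : Perm (Fin (n + 1))} {v : V n} : v ∈ FixS w ↔ ∀ i, v (w i) = v i :=
  Iff.rfl

noncomputable def ell (w : Perm (Fin (n + 1))) : ℕ := (n + 1) - finrank ℚ (FixS w)

lemma finrank_V : finrank ℚ (V n) = n + 1 := by
  simp [Module.finrank_fintype_fun_eq_card]

lemma finrank_FixS_le (w : Perm (Fin (n + 1))) : finrank ℚ (FixS w) ≤ n + 1 := by
  have h := Submodule.finrank_le (FixS w)
  rwa [finrank_V] at h

lemma ell_eq (w : Perm (Fin (n + 1))) : finrank ℚ (FixS w) = (n + 1) - ell w := by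
  have := finrank_FixS_le w
  unfold ell; omega

lemma FixS_one : FixS (1 : Perm (Fin (n + 1))) = ⊤ := by
  ext v; simp [mem_FixS]

lemma ell_one : ell (1 : Perm (Fin (n + 1))) = 0 := by
  rw [ell, FixS_one, finrank_top, finrank_V]
  omega

lemma FixS_inf_le (x y : Perm (Fin (n + 1))) : FixS x ⊓ FixS y ≤ FixS (x * y) := by
  intro v hv i
  rw [Submodule.mem_inf] at hv
  rw [Perm.mul_apply, hv.1 _, hv.2 _]

lemma ell_mul_le (x y : Perm (Fin (n + 1))) : ell (x * y) ≤ ell x + ell y := by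
  have h1 := Submodule.finrank_sup_add_finrank_inf_eq (FixS x) (FixS y)
  have h2 : finrank ℚ ↑(FixS x ⊓ FixS y) ≤ finrank ℚ (FixS (x * y)) :=
    Submodule.finrank_mono (FixS_inf_le x y)
  have h3 := finrank_FixS_le x
  have h4 := finrank_FixS_le y
  have h5 := finrank_FixS_le (x * y)
  have h6 : finrank ℚ ↑(FixS x ⊔ FixS y) ≤ n + 1 := by
    have h := Submodule.finrank_le (FixS x ⊔ FixS y)
    rwa [finrank_V] at h
  unfold ell
  omega

lemma mem_FixS_swap {a b : Fin (n + 1)} {v : V n} :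
    v ∈ FixS (Equiv.swap a b) ↔ v a = v b := by
  constructor
  · intro hv
    have := hv b
    rwa [Equiv.swap_apply_right] at this
  · intro h i
    rcases eq_or_ne i a with rfl | hia
    · rw [Equiv.swap_apply_left]; exact h.symm
    rcases eq_or_ne i b with rfl | hib
    · rw [Equiv.swap_apply_right]; exact h
    · rw [Equiv.swap_apply_of_ne_of_ne hia hib]

lemma ell_swap {a b : Fin (n + 1)} (hab : a ≠ b) : ell (Equiv.swap a b) = 1 := by
  set φ : V n →ₗ[ℚ] ℚ := (LinearMap.proj a : V n →ₗ[ℚ] ℚ) - (LinearMap.proj b : V n →ₗ[ℚ] ℚ) with hφ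
  have hker : FixS (Equiv.swap a b) = LinearMap.ker φ := by
    ext v
    rw [mem_FixS_swap, LinearMap.mem_ker, hφ, LinearMap.sub_apply, LinearMap.proj_apply,
      LinearMap.proj_apply, sub_eq_zero]
  have hsurj : Function.Surjective φ := by
    intro q
    refine ⟨q • (Pi.single a 1 : V n), ?_⟩
    rw [hφ, LinearMap.sub_apply, LinearMap.proj_apply, LinearMap.proj_apply]
    simp [Pi.single_apply, hab.symm]
  have hrange : LinearMap.range φ = ⊤ := LinearMap.range_eq_top.2 hsurj
  have h := LinearMap.finrank_range_add_finrank_ker φ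
  rw [hrange, finrank_top, finrank_V] at h
  have : finrank ℚ ℚ = 1 := finrank_self ℚ
  rw [this] at h
  rw [ell, hker]
  omega

lemma single_mem_FixS {σ : Perm (Fin (n + 1))} {x : Fin (n + 1)} (hx : σ x = x) :
    (Pi.single x 1 : V n) ∈ FixS σ := by
  intro i
  have hiff : σ i = x ↔ i = x := by
    constructor
    · intro h; exact σ.injective (h.trans hx.symm)
    · rintro rfl; exact hx
  simp [Pi.single_apply, hiff]

lemma fix_of_single_mem {σ : Perm (Fin (n + 1))} {x : Fin (n + 1)}
    (h : (Pi.single x 1 : V n) ∈ FixS σ) : σ x = x := by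
  have hx := h x
  by_contra hne
  rw [Pi.single_eq_same, Pi.single_eq_of_ne hne] at hx
  exact zero_ne_one hx

lemma exists_word : ∀ k (w : Perm (Fin (n + 1))), ell w ≤ k →
    ∃ l : List (Perm (Fin (n + 1))), (∀ t ∈ l, t.IsSwap) ∧ l.prod = w ∧ l.length = ell w := by
  intro k
  induction k with
  | zero =>
    intro w hw
    have h0 : ell w = 0 := Nat.le_zero.1 hw
    have hfr : finrank ℚ (FixS w) = n + 1 := by
      have := finrank_FixS_le w
      unfold ell at h0; omega
    have htop : FixS w = ⊤ := by
      apply Submodule.eq_top_of_finrank_eq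
      rw [hfr, finrank_V]
    have hw1 : w = 1 := by
      ext i
      have : (Pi.single (w i) 1 : V n) ∈ FixS w := htop ▸ Submodule.mem_top
      have hi := this i
      rw [Pi.single_eq_same] at hi
      by_contra hne
      rw [Pi.single_eq_of_ne ?_ ] at hi
      · exact zero_ne_one hi.symm
      · intro h
        exact hne (h ▸ rfl)
    subst hw1
    exact ⟨[], by simp, by simp, by simp [ell_one]⟩
  | succ k ih =>
    intro w hw
    by_cases h1 : w = 1
    · subst h1; exact ⟨[], by simp, by simp, by simp [ell_one]⟩
    obtain ⟨x, hx⟩ : ∃ x, w x ≠ x := by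
      by_contra hc
      push_neg at hc
      exact h1 (Equiv.ext hc)
    set t := Equiv.swap x (w x) with ht
    have hxwx : x ≠ w x := fun h => hx h.symm
    have hlt : FixS w < FixS (t * w) := by
      constructor
      · intro v hv i
        rw [Perm.mul_apply]
        have hvx : v (w x) = v x := hv x
        have : v (t (w i)) = v (w i) := by
          rcases eq_or_ne (w i) x with h | h
          · rw [h, ht, Equiv.swap_apply_left]; exact hvx
          rcases eq_or_ne (w i) (w x) with h' | h'
          · rw [h', ht, Equiv.swap_apply_right]; exact hvx.symm
          · rw [ht, Equiv.swap_apply_of_ne_of_ne h h']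
        rw [this, hv i]
      · intro hle
        have hmem : (Pi.single x 1 : V n) ∈ FixS (t * w) := by
          apply single_mem_FixS
          rw [Perm.mul_apply, ht, Equiv.swap_apply_right]
        have := fix_of_single_mem (hle hmem)
        exact hx this
    have hflt : finrank ℚ (FixS w) < finrank ℚ (FixS (t * w)) :=
      Submodule.finrank_lt_finrank_of_lt hlt
    have hell_lt : ell (t * w) < ell w := by
      have h2 := finrank_FixS_le w
      have h3 := finrank_FixS_le (t * w)
      have h0 : 0 < ell w := by
        unfold ell; omega
      unfold ell; omega
    have hell_ge : ell w ≤ ell (t * w) + 1 := by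
      have h5 := ell_mul_le t (t * w)
      have h6 : t * t = 1 := by rw [ht]; exact Equiv.swap_mul_self _ _
      rw [← mul_assoc, h6, one_mul] at h5
      have h7 : ell t = 1 := by rw [ht]; exact ell_swap hxwx
      omega
    obtain ⟨l, hl, hprod, hlen⟩ := ih (t * w) (by omega)
    refine ⟨t :: l, ?_, ?_, ?_⟩
    · intro s hs
      rcases List.mem_cons.1 hs with rfl | hs
      · exact ⟨x, w x, hxwx, rfl⟩
      · exact hl s hs
    · rw [List.prod_cons, hprod, ← mul_assoc, ht, Equiv.swap_mul_self, one_mul]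
    · simp only [List.length_cons, hlen]
      omega

lemma ell_le_word (l : List (Perm (Fin (n + 1)))) (hl : ∀ t ∈ l, t.IsSwap) :
    ell l.prod ≤ l.length := by
  induction l with
  | nil => simp [ell_one]
  | cons t l ih =>
    rw [List.prod_cons]
    have h1 := ell_mul_le t l.prod
    obtain ⟨a, b, hab, rfl⟩ := hl t List.mem_cons_self
    rw [ell_swap hab] at h1
    have h2 := ih (fun s hs => hl s (List.mem_cons_of_mem _ hs))
    simp only [List.length_cons]
    omega

lemma wordLen_eq (w : Perm (Fin (n + 1))) :
    wordLen {σ : Perm (Fin (n + 1)) | σ.IsSwap} w = ell w := by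
  obtain ⟨l, hl, hprod, hlen⟩ := exists_word (ell w) w le_rfl
  have hmem : ell w ∈ {k | ∃ l : List (Perm (Fin (n + 1))), l.length = k ∧
      (∀ t ∈ l, t ∈ {σ : Perm (Fin (n + 1)) | σ.IsSwap}) ∧ l.prod = w} :=
    ⟨l, hlen, hl, hprod⟩
  refine le_antisymm (Nat.sInf_le hmem) ?_
  have hne := Nat.sInf_mem (Set.nonempty_of_mem hmem)
  obtain ⟨l', hlen', hl', hprod'⟩ := hne
  rw [wordLen, ← hlen', ← hprod']
  exact ell_le_word l' hl'

lemma sign_ell (w : Perm (Fin (n + 1))) : Perm.sign w = (-1) ^ ell w := by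
  obtain ⟨l, hl, hprod, hlen⟩ := exists_word (ell w) w le_rfl
  rw [← hlen, ← hprod]
  exact Perm.sign_prod_list_swap hl

lemma ell_mul_swap_ne {w : Perm (Fin (n + 1))} {a b : Fin (n + 1)} (hab : a ≠ b) :
    ell (w * Equiv.swap a b) ≠ ell w := by
  intro h
  have h1 := sign_ell (w * Equiv.swap a b)
  rw [h, map_mul, Perm.sign_swap hab, sign_ell w] at h1
  have h2 : ((-1 : ℤˣ) ^ ell w) * (-1) = ((-1 : ℤˣ) ^ ell w) * 1 := by
    rw [mul_one]; exact h1
  have h3 := mul_left_cancel h2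
  exact absurd h3 (by decide)

lemma FixS_apply_pow {w : Perm (Fin (n + 1))} {v : V n} (hv : v ∈ FixS w) :
    ∀ (k : ℕ) i, v ((w ^ k) i) = v i := by
  intro k
  induction k with
  | zero => simp
  | succ k ih =>
    intro i
    rw [pow_succ', Perm.mul_apply, hv _]
    exact ih i

lemma FixS_const {w : Perm (Fin (n + 1))} {v : V n} (hv : v ∈ FixS w) {a b : Fin (n + 1)}
    (h : w.SameCycle a b) : v a = v b := by
  obtain ⟨k, -, hk⟩ := h.exists_pow_eq'
  rw [← hk, FixS_apply_pow hv]

lemma apply_swap_eq {v : V n} {a b : Fin (n + 1)} (hvab : v a = v b) (i : Fin (n + 1)) :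
    v (Equiv.swap a b i) = v i := by
  rcases eq_or_ne i a with rfl | hia
  · rw [Equiv.swap_apply_left]; exact hvab.symm
  rcases eq_or_ne i b with rfl | hib
  · rw [Equiv.swap_apply_right]; exact hvab
  · rw [Equiv.swap_apply_of_ne_of_ne hia hib]

lemma ell_mul_swap_of_sameCycle {w : Perm (Fin (n + 1))} {a b : Fin (n + 1)} (hab : a ≠ b)
    (h : w.SameCycle a b) : ell (w * Equiv.swap a b) + 1 = ell w := by
  have hle : FixS w ≤ FixS (w * Equiv.swap a b) := by
    intro v hv i
    rw [Perm.mul_apply, hv _, apply_swap_eq (FixS_const hv h) i]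
  have h1 : ell (w * Equiv.swap a b) ≤ ell w := by
    have := Submodule.finrank_mono hle
    have h2 := finrank_FixS_le w
    have h3 := finrank_FixS_le (w * Equiv.swap a b)
    unfold ell; omega
  have h2 : ell w ≤ ell (w * Equiv.swap a b) + 1 := by
    have := ell_mul_le (w * Equiv.swap a b) (Equiv.swap a b)
    rw [mul_assoc, Equiv.swap_mul_self, mul_one, ell_swap hab] at this
    omega
  have h3 := ell_mul_swap_ne (w := w) hab
  omega

lemma sameCycle_mul_swap {z : Perm (Fin (n + 1))} {a b : Fin (n + 1)} (hab : a ≠ b)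
    (h : ¬ z.SameCycle a b) : (z * Equiv.swap a b).SameCycle a b := by
  have hP : ∃ m, 0 < m ∧ (z ^ m) b = b :=
    ⟨orderOf z, orderOf_pos z, by rw [pow_orderOf_eq_one]; rfl⟩
  set m := Nat.find hP with hm
  obtain ⟨hm0, hmb⟩ := Nat.find_spec hP
  set σ := z * Equiv.swap a b with hσ
  have key : ∀ k, 1 ≤ k → k ≤ m → (σ ^ k) a = (z ^ k) b := by
    intro k
    induction k with
    | zero => omega
    | succ k ih =>
      intro _ hk1
      rcases Nat.eq_zero_or_pos k with rfl | hk0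
      · rw [pow_one, pow_one, hσ, Perm.mul_apply, Equiv.swap_apply_left]
      · have hkm : k < m := by omega
        have hne_b : (z ^ k) b ≠ b := by
          intro hc
          exact Nat.find_min hP hkm ⟨hk0, hc⟩
        have hne_a : (z ^ k) b ≠ a := by
          intro hc
          exact h (Perm.SameCycle.symm ⟨(k : ℤ), by rw [zpow_natCast]; exact hc⟩)
        rw [pow_succ', Perm.mul_apply, ih hk0 (by omega), hσ, Perm.mul_apply,
          Equiv.swap_apply_of_ne_of_ne hne_a hne_b, ← Perm.mul_apply, ← pow_succ']
  exact ⟨(m : ℤ), by rw [zpow_natCast, key m hm0 le_rfl, hmb]⟩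

lemma ell_mul_swap_of_not_sameCycle {w : Perm (Fin (n + 1))} {a b : Fin (n + 1)} (hab : a ≠ b)
    (h : ¬ w.SameCycle a b) : ell (w * Equiv.swap a b) = ell w + 1 := by
  have hsc := sameCycle_mul_swap hab h
  have hle : FixS (w * Equiv.swap a b) ≤ FixS w := by
    intro v hv i
    have hvab : v a = v b := FixS_const hv hsc
    have h2 := hv (Equiv.swap a b i)
    rw [Perm.mul_apply, Equiv.swap_apply_self] at h2
    rw [h2, apply_swap_eq hvab i]
  have h1 : ell w ≤ ell (w * Equiv.swap a b) := by
    have := Submodule.finrank_mono hle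
    have h2 := finrank_FixS_le w
    have h3 := finrank_FixS_le (w * Equiv.swap a b)
    unfold ell; omega
  have h2 : ell (w * Equiv.swap a b) ≤ ell w + 1 := by
    have := ell_mul_le w (Equiv.swap a b)
    rw [ell_swap hab] at this
    omega
  have h3 := ell_mul_swap_ne (w := w) hab
  omega

lemma FixS_le_of_add {u v : Perm (Fin (n + 1))} (h : ell u + ell (u⁻¹ * v) = ell v) :
    FixS v ≤ FixS u := by
  set z := u⁻¹ * v with hz
  have hin : FixS u ⊓ FixS z ≤ FixS v := by
    have h2 := FixS_inf_le u z
    rwa [hz, mul_inv_cancel_left] at h2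
  have heq : FixS u ⊓ FixS z = FixS v := by
    apply Submodule.eq_of_le_of_finrank_le hin
    have h1 := Submodule.finrank_sup_add_finrank_inf_eq (FixS u) (FixS z)
    have h2 := finrank_FixS_le u
    have h3 := finrank_FixS_le z
    have h4 := finrank_FixS_le v
    have h6 : finrank ℚ ↑(FixS u ⊔ FixS z) ≤ n + 1 := by
      have hh := Submodule.finrank_le (FixS u ⊔ FixS z)
      rwa [finrank_V] at hh
    unfold ell at h
    omega
  rw [← heq]
  exact inf_le_left

lemma absLe_iff (x y : Perm (Fin (n + 1))) :
    absLe {σ : Perm (Fin (n + 1)) | σ.IsSwap} x y ↔ ell x + ell (x⁻¹ * y) = ell y := by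
  unfold absLe
  rw [wordLen_eq, wordLen_eq, wordLen_eq]

lemma πdel_fix (w : Perm (Fin (n + 1))) (hw : w⁻¹ (Fin.last n) = Fin.last n) :
    πdel n w = w := by
  rw [πdel, hw, Equiv.swap_self]
  ext i
  simp

lemma part1 (w : Perm (Fin (n + 1))) :
    absLe {σ : Perm (Fin (n + 1)) | σ.IsSwap} (πdel n w) w := by
  rw [absLe_iff]
  by_cases hw : w⁻¹ (Fin.last n) = Fin.last n
  · rw [πdel_fix w hw, inv_mul_cancel, ell_one, add_zero]
  · have hwa : w (w⁻¹ (Fin.last n)) = Fin.last n := Equiv.apply_symm_apply w _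
    have hsc : w.SameCycle (w⁻¹ (Fin.last n)) (Fin.last n) := ⟨1, by simpa using hwa⟩
    have hD := ell_mul_swap_of_sameCycle hw hsc
    have hX : (πdel n w)⁻¹ * w = Equiv.swap (w⁻¹ (Fin.last n)) (Fin.last n) := by
      rw [πdel, mul_inv_rev, Equiv.swap_inv, mul_assoc, inv_mul_cancel, mul_one]
    rw [hX, πdel, ell_swap hw]
    exact hD

lemma part2 (u v : Perm (Fin (n + 1)))
    (h : absLe {σ : Perm (Fin (n + 1)) | σ.IsSwap} u v) :
    absLe {σ : Perm (Fin (n + 1)) | σ.IsSwap} (πdel n u) (πdel n v) := by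
  rw [absLe_iff] at h ⊢
  set z := u⁻¹ * v with hz
  by_cases hv : v⁻¹ (Fin.last n) = Fin.last n
  · have hvlast : v (Fin.last n) = Fin.last n := by
      conv_lhs => rw [← hv]
      exact Equiv.apply_symm_apply v _
    have hulast : u (Fin.last n) = Fin.last n :=
      fix_of_single_mem (FixS_le_of_add h (single_mem_FixS hvlast))
    have hu : u⁻¹ (Fin.last n) = Fin.last n := Equiv.Perm.inv_eq_iff_eq.2 hulast.symm
    rw [πdel_fix u hu, πdel_fix v hv]
    exact h
  · have hvb : v (v⁻¹ (Fin.last n)) = Fin.last n := Equiv.apply_symm_apply v _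
    have hscv : v.SameCycle (v⁻¹ (Fin.last n)) (Fin.last n) := ⟨1, by simpa using hvb⟩
    have hDv : ell (πdel n v) + 1 = ell v := by
      rw [πdel]
      exact ell_mul_swap_of_sameCycle hv hscv
    by_cases hu : u⁻¹ (Fin.last n) = Fin.last n
    · -- u fixes the last element, v does not
      have hzb : z (v⁻¹ (Fin.last n)) = Fin.last n := by
        rw [hz, Perm.mul_apply, hvb, hu]
      have hscz : z.SameCycle (v⁻¹ (Fin.last n)) (Fin.last n) := ⟨1, by simpa using hzb⟩
      have hDz : ell (z * Equiv.swap (v⁻¹ (Fin.last n)) (Fin.last n)) + 1 = ell z :=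
        ell_mul_swap_of_sameCycle hv hscz
      rw [πdel_fix u hu]
      have hX : u⁻¹ * πdel n v = z * Equiv.swap (v⁻¹ (Fin.last n)) (Fin.last n) := by
        rw [πdel, hz, mul_assoc]
      rw [hX]
      omega
    · -- neither u nor v fixes the last element
      have hua : u (u⁻¹ (Fin.last n)) = Fin.last n := Equiv.apply_symm_apply u _
      have hscu : u.SameCycle (u⁻¹ (Fin.last n)) (Fin.last n) := ⟨1, by simpa using hua⟩
      have hDu : ell (πdel n u) + 1 = ell u := by
        rw [πdel]
        exact ell_mul_swap_of_sameCycle hu hscu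
      have hzb : z (v⁻¹ (Fin.last n)) = u⁻¹ (Fin.last n) := by
        rw [hz, Perm.mul_apply, hvb]
      have hXeq : (πdel n u)⁻¹ * πdel n v
          = Equiv.swap (u⁻¹ (Fin.last n)) (Fin.last n)
            * (z * Equiv.swap (v⁻¹ (Fin.last n)) (Fin.last n)) := by
        rw [πdel, πdel, mul_inv_rev, Equiv.swap_inv, hz]
        group
      by_cases hzl : z (Fin.last n) = Fin.last n
      · -- the quotient fixes last : X equals the quotient itself
        have hXz : Equiv.swap (u⁻¹ (Fin.last n)) (Fin.last n)
            * (z * Equiv.swap (v⁻¹ (Fin.last n)) (Fin.last n)) = z := by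
          apply Equiv.ext
          intro i
          simp only [Perm.mul_apply]
          rcases eq_or_ne i (v⁻¹ (Fin.last n)) with rfl | hib
          · rw [Equiv.swap_apply_left, hzl, Equiv.swap_apply_right, hzb]
          rcases eq_or_ne i (Fin.last n) with rfl | hil
          · rw [Equiv.swap_apply_right, hzb, Equiv.swap_apply_left, hzl]
          · have hza : z i ≠ u⁻¹ (Fin.last n) := fun hc =>
              hib (z.injective (hc.trans hzb.symm))
            have hzl' : z i ≠ Fin.last n := fun hc =>
              hil (z.injective (hc.trans hzl.symm))
            rw [Equiv.swap_apply_of_ne_of_ne hib hil,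
              Equiv.swap_apply_of_ne_of_ne hza hzl']
        rw [hXeq, hXz]
        omega
      · -- the quotient moves last
        have htri : ell (πdel n v) ≤ ell (πdel n u) + ell ((πdel n u)⁻¹ * πdel n v) := by
          have h5 := ell_mul_le (πdel n u) ((πdel n u)⁻¹ * πdel n v)
          rwa [mul_inv_cancel_left] at h5
        have hXle : ell ((πdel n u)⁻¹ * πdel n v) ≤ ell z := by
          rw [hXeq]
          have hyl : (z * Equiv.swap (v⁻¹ (Fin.last n)) (Fin.last n)) (Fin.last n)
              = u⁻¹ (Fin.last n) := by
            rw [Perm.mul_apply, Equiv.swap_apply_right, hzb]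
          by_cases hsc : z.SameCycle (v⁻¹ (Fin.last n)) (Fin.last n)
          · have hDz := ell_mul_swap_of_sameCycle hv hsc
            have h5 := ell_mul_le (Equiv.swap (u⁻¹ (Fin.last n)) (Fin.last n))
              (z * Equiv.swap (v⁻¹ (Fin.last n)) (Fin.last n))
            have h6 := ell_swap hu
            omega
          · have hDz := ell_mul_swap_of_not_sameCycle hv hsc
            set y := z * Equiv.swap (v⁻¹ (Fin.last n)) (Fin.last n) with hy
            have hscy1 : y.SameCycle (Fin.last n) (u⁻¹ (Fin.last n)) := ⟨1, by simpa using hyl⟩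
            have hscy : y.SameCycle (u⁻¹ (Fin.last n)) (Fin.last n) := hscy1.symm
            have hne' : y⁻¹ (u⁻¹ (Fin.last n)) ≠ y⁻¹ (Fin.last n) := fun hc =>
              hu (by simpa using congrArg y hc)
            have hscy' : y.SameCycle (y⁻¹ (u⁻¹ (Fin.last n))) (y⁻¹ (Fin.last n)) :=
              Perm.sameCycle_symm_apply_left.2 (Perm.sameCycle_symm_apply_right.2 hscy)
            have hconj : Equiv.swap (u⁻¹ (Fin.last n)) (Fin.last n) * y
                = y * Equiv.swap (y⁻¹ (u⁻¹ (Fin.last n))) (y⁻¹ (Fin.last n)) := by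
              have hs := Equiv.swap_apply_apply y (y⁻¹ (u⁻¹ (Fin.last n))) (y⁻¹ (Fin.last n))
              rw [show y (y⁻¹ (u⁻¹ (Fin.last n))) = u⁻¹ (Fin.last n) from Equiv.apply_symm_apply y _,
                show y (y⁻¹ (Fin.last n)) = Fin.last n from Equiv.apply_symm_apply y _] at hs
              rw [hs]
              group
            have hDy := ell_mul_swap_of_sameCycle hne' hscy'
            rw [hconj]
            omega
        omega

end Stmt19

/-- `π_n(w) ⪯ w` in the absolute order on `S_n`, and `π_n` is
order preserving: `u ⪯ v` implies `π_n(u) ⪯ π_n(v)`. -/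


theorem stmt_19 (n : ℕ) :
    (∀ w : Equiv.Perm (Fin (n + 1)),
      absLe {σ : Equiv.Perm (Fin (n + 1)) | σ.IsSwap} (πdel n w) w) ∧
    (∀ u v : Equiv.Perm (Fin (n + 1)),
      absLe {σ : Equiv.Perm (Fin (n + 1)) | σ.IsSwap} u v →
      absLe {σ : Equiv.Perm (Fin (n + 1)) | σ.IsSwap} (πdel n u) (πdel n v)) := by
  exact ⟨Stmt19.part1, Stmt19.part2⟩
end
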